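/- arXiv:1805.11652 — 6 statements merged into one kernel-verified Lean document; each statement's English description precedes it below -/
import Mathlib

section
/- For classical probability distributions: let P be a probability distribution and Q a (not necessarily normalized) nonnegative function on a finite set with supp(P) ⊆ supp(Q). Define the divergence variance V(P‖Q) = Σ_x P(x)(log(P(x)/Q(x)) − D(P‖Q))², where D(P‖Q) = Σ_x P(x) log(P(x)/Q(x)). Then for any ν ∈ (0,1), V(P‖Q) ≤ (1/ν²)·log²(2^{−ν D(P‖Q) + ν D_{1+ν}(P‖Q)} + 2^{ν D(P‖Q) − ν D_{1−ν}(P‖Q)} + 1), where D_α(P‖Q) = (1/(α−1)) log Σ_x P(x)^α Q(x)^{1−α}. -/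
open Finset Real

lemma logsq_concave : ConcaveOn ℝ (Set.Ici (3:ℝ)) (fun s => (Real.log s)^2) := by
  have h3 : ∀ x : ℝ, x ∈ interior (Set.Ici (3:ℝ)) → 3 < x := by
    intro x hx; simpa [interior_Ici] using hx
  apply concaveOn_of_hasDerivWithinAt2_nonpos (f' := fun s => 2*Real.log s*s⁻¹)
    (f'' := fun s => 2*(1-Real.log s)/s^2) (convex_Ici 3)
  · intro x hx
    exact ((Real.continuousAt_log (by simp at hx; linarith)).continuousWithinAt).pow 2
  · intro x hx
    have hx0 : x ≠ 0 := by have := h3 x hx; linarith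
    have := ((Real.hasDerivAt_log hx0).pow 2)
    have h2 : (2:ℕ) * Real.log x ^ (2-1) * x⁻¹ = 2 * Real.log x * x⁻¹ := by ring
    rw [h2] at this
    exact this.hasDerivWithinAt
  · intro x hx
    have hx0 : x ≠ 0 := by have := h3 x hx; linarith
    have := ((Real.hasDerivAt_log hx0).const_mul 2).mul (hasDerivAt_inv hx0)
    have h2 : 2 * x⁻¹ * x⁻¹ + 2 * Real.log x * (-(x ^ 2)⁻¹) = 2*(1-Real.log x)/x^2 := by
      field_simp; ring
    rw [h2] at this
    exact this.hasDerivWithinAt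
  · intro x hx
    have hx3 := h3 x hx
    have hlog : 1 ≤ Real.log x := by
      rw [show (1:ℝ) = Real.log (Real.exp 1) by simp]
      exact Real.log_le_log (Real.exp_pos 1) (by nlinarith [Real.exp_one_lt_d9])
    apply div_nonpos_of_nonpos_of_nonneg
    · linarith
    · positivity

lemma logbsq_concave : ConcaveOn ℝ (Set.Ici (3:ℝ)) (fun s => (Real.logb 2 s)^2) := by
  have h2 : (fun s => (Real.logb 2 s)^2)
      = fun s => ((Real.log 2)⁻¹)^2 • (Real.log s)^2 := by
    funext s; simp [Real.logb, div_eq_inv_mul, mul_pow, smul_eq_mul]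
  rw [h2]; exact logsq_concave.smul (by positivity)

lemma pointwise_bound (t : ℝ) : t^2 ≤ (Real.logb 2 ((2:ℝ)^t + (2:ℝ)^(-t) + 1))^2 := by
  have hS : (2:ℝ)^|t| ≤ (2:ℝ)^t + (2:ℝ)^(-t) + 1 := by
    rcases abs_cases t with ⟨h, _⟩ | ⟨h, _⟩ <;> rw [h] <;>
      nlinarith [Real.rpow_pos_of_pos (by norm_num : (0:ℝ)<2) t,
        Real.rpow_pos_of_pos (by norm_num : (0:ℝ)<2) (-t)]
  have habs : |t| ≤ Real.logb 2 ((2:ℝ)^t + (2:ℝ)^(-t) + 1) := by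
    calc |t| = Real.logb 2 ((2:ℝ)^|t|) :=
          (Real.logb_rpow (by norm_num) (by norm_num)).symm
    _ ≤ _ := Real.logb_le_logb_of_le (by norm_num)
          (Real.rpow_pos_of_pos (by norm_num) _) hS
  calc t^2 = |t|^2 := (sq_abs t).symm
  _ ≤ _ := pow_le_pow_left₀ (abs_nonneg t) habs 2

/-- Divergence variance bound via Rényi divergences, classical case. -/
theorem stmt0 {X : Type*} [Fintype X] (P Q : X → ℝ)
    (hP0 : ∀ x, 0 ≤ P x) (hP1 : ∑ x, P x = 1)
    (hQ0 : ∀ x, 0 ≤ Q x) (hsupp : ∀ x, 0 < P x → 0 < Q x)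
    (ν : ℝ) (hν : ν ∈ Set.Ioo (0:ℝ) 1)
    (D : ℝ) (hD : D = ∑ x, P x * Real.logb 2 (P x / Q x))
    (V : ℝ) (hV : V = ∑ x, P x * (Real.logb 2 (P x / Q x) - D)^2)
    (Dα : ℝ → ℝ)
    (hDα : ∀ α : ℝ, Dα α =
      (1/(α-1)) * Real.logb 2 (∑ x, Real.rpow (P x) α * Real.rpow (Q x) (1-α))) :
    V ≤ (1/ν^2) *
      (Real.logb 2 ((2:ℝ) ^ (-ν * D + ν * Dα (1+ν))
        + (2:ℝ) ^ (ν * D - ν * Dα (1-ν)) + 1))^2 := by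
  obtain ⟨hν0, hν1⟩ := hν
  have hν0' : ν ≠ 0 := ne_of_gt hν0
  set L : X → ℝ := fun x => Real.logb 2 (P x / Q x) - D with hL
  -- positivity of sums
  have hex : ∃ x, 0 < P x := by
    by_contra h; push_neg at h
    have : ∑ x, P x = 0 :=
      Finset.sum_eq_zero (fun x _ => le_antisymm (h x) (hP0 x))
    rw [this] at hP1; norm_num at hP1
  obtain ⟨x0, hx0⟩ := hex
  -- identity for the first exponential
  have hT : ∑ x, Real.rpow (P x) (1+ν) * Real.rpow (Q x) (1-(1+ν))
      = ∑ x, P x * (2:ℝ)^(ν * Real.logb 2 (P x / Q x)) := by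
    apply Finset.sum_congr rfl
    intro x _
    simp only [Real.rpow_eq_pow]
    rcases eq_or_lt_of_le (hP0 x) with hp | hp
    · rw [← hp, Real.zero_rpow (ne_of_gt (by linarith : (0:ℝ) < 1+ν)), zero_mul, zero_mul]
    · have hq := hsupp x hp
      have hr : 0 < P x / Q x := div_pos hp hq
      have h1 : (2:ℝ)^(ν * Real.logb 2 (P x / Q x)) = (P x / Q x) ^ ν := by
        rw [mul_comm, Real.rpow_mul (by norm_num : (0:ℝ) ≤ 2),
          Real.rpow_logb (by norm_num) (by norm_num) hr]
      rw [h1, Real.div_rpow (hP0 x) (hQ0 x),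
        show (1:ℝ)+ν = (1:ℝ)+ν from rfl]
      rw [Real.rpow_add hp, Real.rpow_one,
        show (1:ℝ)-(1+ν) = -ν by ring, Real.rpow_neg (hQ0 x)]
      field_simp
  have hT2 : ∑ x, Real.rpow (P x) (1-ν) * Real.rpow (Q x) (1-(1-ν))
      = ∑ x, P x * (2:ℝ)^(-(ν * Real.logb 2 (P x / Q x))) := by
    apply Finset.sum_congr rfl
    intro x _
    simp only [Real.rpow_eq_pow]
    rcases eq_or_lt_of_le (hP0 x) with hp | hp
    · rw [← hp, Real.zero_rpow (ne_of_gt (by linarith : (0:ℝ) < 1-ν)), zero_mul, zero_mul]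
    · have hq := hsupp x hp
      have hr : 0 < P x / Q x := div_pos hp hq
      have h1 : (2:ℝ)^(-(ν * Real.logb 2 (P x / Q x))) = (P x / Q x) ^ (-ν) := by
        rw [← neg_mul, mul_comm, Real.rpow_mul (by norm_num : (0:ℝ) ≤ 2),
          Real.rpow_logb (by norm_num) (by norm_num) hr]
      rw [h1, Real.div_rpow (hP0 x) (hQ0 x),
        Real.rpow_sub hp, Real.rpow_one,
        show (1:ℝ)-(1-ν) = ν by ring, Real.rpow_neg (hP0 x), Real.rpow_neg (hQ0 x)]
      have hpν : (P x) ^ ν ≠ 0 := ne_of_gt (Real.rpow_pos_of_pos hp ν)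
      have hqν : (Q x) ^ ν ≠ 0 := ne_of_gt (Real.rpow_pos_of_pos hq ν)
      field_simp
  have hTpos : 0 < ∑ x, P x * (2:ℝ)^(ν * Real.logb 2 (P x / Q x)) := by
    apply Finset.sum_pos'
    · intro x _
      exact mul_nonneg (hP0 x) (Real.rpow_pos_of_pos (by norm_num) _).le
    · exact ⟨x0, Finset.mem_univ x0,
        mul_pos hx0 (Real.rpow_pos_of_pos (by norm_num) _)⟩
  have hT2pos : 0 < ∑ x, P x * (2:ℝ)^(-(ν * Real.logb 2 (P x / Q x))) := by
    apply Finset.sum_pos'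
    · intro x _
      exact mul_nonneg (hP0 x) (Real.rpow_pos_of_pos (by norm_num) _).le
    · exact ⟨x0, Finset.mem_univ x0,
        mul_pos hx0 (Real.rpow_pos_of_pos (by norm_num) _)⟩
  have hA : (2:ℝ) ^ (-ν * D + ν * Dα (1+ν)) = ∑ x, P x * (2:ℝ)^(ν * L x) := by
    have h1 : ν * Dα (1+ν)
        = Real.logb 2 (∑ x, P x * (2:ℝ)^(ν * Real.logb 2 (P x / Q x))) := by
      rw [hDα, hT, show (1:ℝ)+ν-1 = ν by ring]
      field_simp
    rw [h1, Real.rpow_add (by norm_num),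
      Real.rpow_logb (by norm_num) (by norm_num) hTpos, Finset.mul_sum]
    apply Finset.sum_congr rfl
    intro x _
    rw [mul_comm ((2:ℝ)^(-ν*D)) _, mul_assoc, ← Real.rpow_add (by norm_num)]
    congr 1
    simp only [hL]; ring
  have hB : (2:ℝ) ^ (ν * D - ν * Dα (1-ν)) = ∑ x, P x * (2:ℝ)^(-(ν * L x)) := by
    have h1 : -(ν * Dα (1-ν))
        = Real.logb 2 (∑ x, P x * (2:ℝ)^(-(ν * Real.logb 2 (P x / Q x)))) := by
      rw [hDα, hT2, show (1:ℝ)-ν-1 = -ν by ring]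
      field_simp
    rw [sub_eq_add_neg, Real.rpow_add (by norm_num), h1,
      Real.rpow_logb (by norm_num) (by norm_num) hT2pos, Finset.mul_sum]
    apply Finset.sum_congr rfl
    intro x _
    rw [mul_comm ((2:ℝ)^(ν*D)) _, mul_assoc, ← Real.rpow_add (by norm_num)]
    congr 1
    simp only [hL]; ring
  -- the random variable S
  set S : X → ℝ := fun x => (2:ℝ)^(ν * L x) + (2:ℝ)^(-(ν * L x)) + 1 with hSdef
  have hS3 : ∀ x, S x ∈ Set.Ici (3:ℝ) := by
    intro x
    have ha : 0 < (2:ℝ)^(ν * L x) := Real.rpow_pos_of_pos (by norm_num) _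
    have hinv : (2:ℝ)^(-(ν * L x)) = ((2:ℝ)^(ν * L x))⁻¹ :=
      Real.rpow_neg (by norm_num) _
    simp only [Set.mem_Ici, hSdef]
    rw [hinv]
    have : 2 ≤ (2:ℝ)^(ν * L x) + ((2:ℝ)^(ν * L x))⁻¹ := by
      rw [← sub_nonneg]
      have h := sq_nonneg ((2:ℝ)^(ν * L x) - 1)
      have h2 : ((2:ℝ)^(ν * L x) + ((2:ℝ)^(ν * L x))⁻¹ - 2)
          = ((2:ℝ)^(ν * L x) - 1)^2 / (2:ℝ)^(ν * L x) := by
        field_simp; ring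
      rw [h2]; positivity
    linarith
  have hSum : ∑ x, P x * S x
      = (∑ x, P x * (2:ℝ)^(ν * L x)) + (∑ x, P x * (2:ℝ)^(-(ν * L x))) + 1 := by
    simp only [hSdef, mul_add, Finset.sum_add_distrib, mul_one, hP1]
  -- Jensen
  have hjensen : ∑ x, P x * (Real.logb 2 (S x))^2
      ≤ (Real.logb 2 (∑ x, P x * S x))^2 := by
    have := logbsq_concave.le_map_sum (t := Finset.univ) (w := P) (p := S)
      (fun x _ => hP0 x) hP1 (fun x _ => hS3 x)
    simpa using this
  -- pointwise
  have hpt : ν^2 * V ≤ ∑ x, P x * (Real.logb 2 (S x))^2 := by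
    have h1 : ν^2 * V = ∑ x, P x * (ν * L x)^2 := by
      rw [hV, Finset.mul_sum]
      apply Finset.sum_congr rfl
      intro x _
      simp only [hL]; ring
    rw [h1]
    apply Finset.sum_le_sum
    intro x _
    exact mul_le_mul_of_nonneg_left (pointwise_bound (ν * L x)) (hP0 x)
  have hmain : ν^2 * V ≤ (Real.logb 2 ((2:ℝ) ^ (-ν * D + ν * Dα (1+ν))
      + (2:ℝ) ^ (ν * D - ν * Dα (1-ν)) + 1))^2 := by
    rw [hA, hB, ← hSum]
    exact hpt.trans hjensen
  rw [one_div, inv_mul_eq_div, le_div_iff₀ (by positivity)]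
  linarith
end

section
/- Let X and Y be finite sets, and let p be a joint probability distribution on X × Y. Define the conditional entropy variance V(X|Y) = Σ_{x,y} p(x,y)(−log(p(x,y)/p_Y(y)) − H(X|Y))², where H(X|Y) = −Σ_{x,y} p(x,y) log(p(x,y)/p_Y(y)) and p_Y is the marginal on Y. Then V(X|Y) ≤ log²(2|X| + 1). -/
open Finset Real

lemma lemA (ε t : ℝ) (hε : 0 < ε) (ht0 : 0 ≤ t) (ht1 : t ≤ 1) :
    t * (Real.log t)^2 ≤ (4 / (ε^2 * Real.exp 2)) * t ^ (1 - ε) := by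
  rcases eq_or_lt_of_le ht0 with h | h
  · rw [← h, Real.log_zero]
    have : (0:ℝ) ≤ 4 / (ε^2 * Real.exp 2) * (0:ℝ) ^ (1 - ε) := by positivity
    simpa using this
  · have hlog : Real.log t ≤ 0 := Real.log_nonpos ht0 ht1
    set u : ℝ := -(ε/2) * Real.log t with hu
    have hu0 : 0 ≤ u := by rw [hu]; nlinarith
    have hte : t ^ ε = Real.exp (-(2*u)) := by
      rw [Real.rpow_def_of_pos h]; congr 1; rw [hu]; ring
    have key : t ^ ε * (Real.log t)^2 ≤ 4 / (ε^2 * Real.exp 2) := by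
      have hlt : Real.log t = -(2*u)/ε := by rw [hu]; field_simp
      rw [hte, hlt]
      have h1 : u ≤ Real.exp (u - 1) := by
        have := Real.add_one_le_exp (u - 1); linarith
      have h3 : Real.exp (u-1) ^ 2 = Real.exp (2*u) / Real.exp 2 := by
        rw [sq, ← Real.exp_add, eq_div_iff (Real.exp_pos 2).ne', ← Real.exp_add]
        congr 1; ring
      have h2 : u^2 * Real.exp 2 ≤ Real.exp (2*u) := by
        have : u^2 ≤ Real.exp (u-1)^2 := by nlinarith [Real.exp_pos (u-1)]
        rw [h3] at this
        rw [← le_div_iff₀ (Real.exp_pos 2)]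
        exact this
      have hm : Real.exp (-(2*u)) * Real.exp (2*u) = 1 := by
        rw [← Real.exp_add]; simp
      have h4 : u^2 * Real.exp (-(2*u)) ≤ 1 / Real.exp 2 := by
        rw [le_div_iff₀ (Real.exp_pos 2)]
        nlinarith [Real.exp_pos (-(2*u)), Real.exp_pos (2*u), Real.exp_pos 2]
      have e2 : Real.exp (-(2*u)) * (-(2*u)/ε)^2 = (4/ε^2) * (u^2 * Real.exp (-(2*u))) := by
        field_simp; ring
      rw [e2]
      calc (4/ε^2) * (u^2 * Real.exp (-(2*u))) ≤ (4/ε^2) * (1/Real.exp 2) := by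
            apply mul_le_mul_of_nonneg_left h4; positivity
        _ = 4 / (ε^2 * Real.exp 2) := by field_simp
    have hsplit : t * (Real.log t)^2 = t ^ (1-ε) * (t ^ ε * (Real.log t)^2) := by
      rw [← mul_assoc, ← Real.rpow_add h]; norm_num
    rw [hsplit, mul_comm ((4:ℝ) / (ε^2 * Real.exp 2)) _]
    exact mul_le_mul_of_nonneg_left key (Real.rpow_nonneg ht0 _)

lemma lemB {X : Type*} [Fintype X] (q : X → ℝ) (hq : ∀ x, 0 ≤ q x) (h1 : ∑ x, q x = 1)
    (ε : ℝ) (hε : 0 < ε) (hε1 : ε < 1) :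
    ∑ x, q x ^ (1 - ε) ≤ (Fintype.card X : ℝ) ^ ε := by
  set P : ℝ := 1/(1-ε) with hP
  have h1ε : 0 < 1 - ε := by linarith
  have hp : 1 ≤ P := by rw [hP, le_div_iff₀ h1ε]; linarith
  have hP0 : 0 < P := lt_of_lt_of_le one_pos hp
  have hqp : ∀ x : X, (q x ^ (1-ε)) ^ P = q x := by
    intro x
    rw [← Real.rpow_mul (hq x)]
    have : (1-ε) * P = 1 := by rw [hP]; field_simp
    rw [this, Real.rpow_one]
  have key := Real.rpow_sum_le_const_mul_sum_rpow_of_nonneg (s := (univ : Finset X))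
    (f := fun x => q x ^ (1 - ε)) hp (fun i _ => Real.rpow_nonneg (hq i) _)
  simp only [hqp] at key
  rw [h1, mul_one, Finset.card_univ] at key
  set A : ℝ := ∑ x, q x ^ (1-ε) with hA
  have hA0 : 0 ≤ A := Finset.sum_nonneg fun x _ => Real.rpow_nonneg (hq x) _
  have step := Real.rpow_le_rpow (Real.rpow_nonneg hA0 P) key (le_of_lt (by positivity : (0:ℝ) < 1/P))
  rw [← Real.rpow_mul hA0, mul_one_div, div_self hP0.ne', Real.rpow_one] at step
  rw [← Real.rpow_mul (by positivity : (0:ℝ) ≤ (Fintype.card X : ℝ))] at step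
  have : (P - 1) * (1/P) = ε := by
    rw [hP]; field_simp; ring
  rwa [this] at step

lemma lemCC {X : Type*} [Fintype X] (q : X → ℝ) (hq : ∀ x, 0 ≤ q x) (h1 : ∑ x, q x = 1) :
    ∑ x, q x * (Real.log (q x))^2 ≤ (Real.log (2 * (Fintype.card X : ℝ) + 1))^2 := by
  rcases isEmpty_or_nonempty X with hX | hX
  · simp at h1
  have hcard : 1 ≤ Fintype.card X := Fintype.card_pos
  set M : ℝ := (Fintype.card X : ℝ) with hM
  have hM1 : 1 ≤ M := by rw [hM]; exact_mod_cast hcard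
  set c : ℝ := Real.log (2 * M + 1) with hc
  have hq1 : ∀ x, q x ≤ 1 := by
    intro x
    calc q x ≤ ∑ y, q y := Finset.single_le_sum (fun y _ => hq y) (Finset.mem_univ x)
      _ = 1 := h1
  have he1 := Real.exp_one_gt_d9
  have he1' := Real.exp_one_lt_d9
  have he2 : Real.exp 2 = Real.exp 1 * Real.exp 1 := by
    rw [← Real.exp_add]; norm_num
  have hc1 : 1 < c := by
    have h3 : Real.exp 1 < 2 * M + 1 := by nlinarith
    have := Real.log_lt_log (Real.exp_pos 1) h3
    rwa [Real.log_exp] at this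
  by_cases hc2 : c ≤ 2
  · -- small case: M ≤ 3
    have hMe : 2 * M + 1 ≤ Real.exp 2 := by
      rw [← Real.exp_log (by nlinarith : (0:ℝ) < 2 * M + 1), ← hc]
      exact Real.exp_le_exp.mpr hc2
    have hexp2lt : Real.exp 2 < 7.39 := by nlinarith [Real.exp_one_lt_d9]
    have hM3 : Fintype.card X ≤ 3 := by
      by_contra hcon
      push_neg at hcon
      have : (4:ℝ) ≤ M := by rw [hM]; exact_mod_cast hcon
      nlinarith
    have hbound : ∑ x, q x * (Real.log (q x))^2 ≤ M * (4 / Real.exp 2) := by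
      calc ∑ x, q x * (Real.log (q x))^2 ≤ ∑ _x : X, 4 / Real.exp 2 := by
            apply Finset.sum_le_sum
            intro x _
            have := lemA 1 (q x) one_pos (hq x) (hq1 x)
            simpa using this
        _ = M * (4 / Real.exp 2) := by
            rw [Finset.sum_const, Finset.card_univ, nsmul_eq_mul, hM]
    refine le_trans hbound ?_
    have l2 := Real.log_two_gt_d9
    have l4 : Real.log 4 = 2 * Real.log 2 := by
      rw [show (4:ℝ) = 2^2 by norm_num, Real.log_pow]; push_cast; ring
    have hcases : Fintype.card X = 1 ∨ Fintype.card X = 2 ∨ Fintype.card X = 3 := by omega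
    have he729 : (7.29:ℝ) < Real.exp 2 := by nlinarith
    rcases hcases with h | h | h <;>
      rw [hc, hM, h] <;> push_cast <;> norm_num
    · -- M = 1 : 4/exp 2 ≤ (log 3)^2
      have l3 : 1 < Real.log 3 := by
        have h3 : Real.exp 1 < 3 := by nlinarith
        have := Real.log_lt_log (Real.exp_pos 1) h3
        rwa [Real.log_exp] at this
      rw [div_le_iff₀ (Real.exp_pos 2)]
      nlinarith
    · -- M = 2 : 8/exp2 ≤ (log 5)^2
      have l5 : Real.log 4 ≤ Real.log 5 := by
        apply Real.log_le_log (by norm_num); norm_num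
      rw [show (2:ℝ) * (4 / Real.exp 2) = 8 / Real.exp 2 by ring,
        div_le_iff₀ (Real.exp_pos 2)]
      nlinarith
    · -- M = 3 : 12/exp2 ≤ (log 7)^2
      have l7 : Real.log 4 ≤ Real.log 7 := by
        apply Real.log_le_log (by norm_num); norm_num
      rw [show (3:ℝ) * (4 / Real.exp 2) = 12 / Real.exp 2 by ring,
        div_le_iff₀ (Real.exp_pos 2)]
      nlinarith
  · push_neg at hc2
    set ε : ℝ := 2 / c with hε
    have hc0 : 0 < c := by linarith
    have hε0 : 0 < ε := by positivity
    have hε1 : ε < 1 := by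
      rw [hε, div_lt_one hc0]; linarith
    have coef : 4 / (ε^2 * Real.exp 2) = c^2 / Real.exp 2 := by
      rw [hε]; field_simp; ring
    have hbound : ∑ x, q x * (Real.log (q x))^2
        ≤ (c^2 / Real.exp 2) * ∑ x, q x ^ (1 - ε) := by
      rw [Finset.mul_sum]
      apply Finset.sum_le_sum
      intro x _
      have := lemA ε (q x) hε0 (hq x) (hq1 x)
      rwa [coef] at this
    refine le_trans hbound ?_
    have hB := lemB q hq h1 ε hε0 hε1
    have hMle : (Fintype.card X : ℝ) ^ ε ≤ (2 * M + 1) ^ ε := by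
      apply Real.rpow_le_rpow (by positivity) (by rw [← hM]; linarith) (le_of_lt hε0)
    have hval : (2 * M + 1) ^ ε = Real.exp 2 := by
      rw [Real.rpow_def_of_pos (by nlinarith : (0:ℝ) < 2 * M + 1), ← hc]
      congr 1
      rw [hε]; field_simp
    calc (c^2 / Real.exp 2) * ∑ x, q x ^ (1 - ε)
        ≤ (c^2 / Real.exp 2) * (2 * M + 1) ^ ε := by
          apply mul_le_mul_of_nonneg_left (le_trans hB hMle) (by positivity)
      _ = c^2 := by rw [hval]; field_simp

/-- The conditional entropy variance is bounded by log²(2|X|+1). -/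
theorem stmt1 {X Y : Type*} [Fintype X] [Fintype Y] (p : X × Y → ℝ)
    (h0 : ∀ z, 0 ≤ p z) (h1 : ∑ z, p z = 1)
    (H V : ℝ)
    (hH : H = -∑ z : X × Y, p z * Real.logb 2 (p z / (∑ a, p (a, z.2))))
    (hV : V = ∑ z : X × Y, p z * (-Real.logb 2 (p z / (∑ a, p (a, z.2))) - H)^2) :
    V ≤ (Real.logb 2 (2 * (Fintype.card X : ℝ) + 1))^2 := by
  have hA : (∑ z : X × Y, p z * Real.logb 2 (p z / (∑ a, p (a, z.2)))) = -H := by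
    rw [hH]; ring
  have hV2 : V = (∑ z : X × Y, p z * (Real.logb 2 (p z / (∑ a, p (a, z.2))))^2) - H^2 := by
    rw [hV]
    have expand : ∀ z : X × Y, p z * (-Real.logb 2 (p z / (∑ a, p (a, z.2))) - H)^2
        = p z * (Real.logb 2 (p z / (∑ a, p (a, z.2))))^2
          + (2*H) * (p z * Real.logb 2 (p z / (∑ a, p (a, z.2)))) + H^2 * p z := fun z => by
      ring
    simp_rw [expand]
    rw [Finset.sum_add_distrib, Finset.sum_add_distrib, ← Finset.mul_sum, ← Finset.mul_sum,
      hA, h1]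
    ring
  set c2 : ℝ := (Real.log (2 * (Fintype.card X : ℝ) + 1))^2 with hc2
  -- the key bound on the second moment, in natural log
  have key : (∑ z : X × Y, p z * (Real.log (p z / (∑ a, p (a, z.2))))^2) ≤ c2 := by
    rw [Fintype.sum_prod_type_right]
    have hy : ∀ y : Y, (∑ x, p (x,y) * (Real.log (p (x,y) / (∑ a, p (a,y))))^2)
        ≤ (∑ a, p (a,y)) * c2 := by
      intro y
      set s : ℝ := ∑ a, p (a,y) with hs
      have hs0 : 0 ≤ s := Finset.sum_nonneg fun a _ => h0 _
      rcases eq_or_lt_of_le hs0 with h | h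
      · have hz : ∀ x, p (x,y) = 0 := by
          intro x
          have := (Finset.sum_eq_zero_iff_of_nonneg (fun a _ => h0 (a, y))).mp h.symm
          exact this x (Finset.mem_univ x)
        simp [hz, ← h]
      · have hq : ∀ x, 0 ≤ p (x,y) / s := fun x => div_nonneg (h0 _) hs0
        have hq1 : ∑ x, p (x,y) / s = 1 := by
          rw [← Finset.sum_div, ← hs, div_self h.ne']
        have hc := lemCC (fun x => p (x,y) / s) hq hq1
        have rewr : ∀ x : X, p (x,y) * (Real.log (p (x,y)/s))^2
            = s * ((p (x,y)/s) * (Real.log (p (x,y)/s))^2) := by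
          intro x; field_simp
        simp_rw [rewr]
        rw [← Finset.mul_sum]
        exact mul_le_mul_of_nonneg_left hc hs0
    calc ∑ y, ∑ x, p (x,y) * (Real.log (p (x,y) / (∑ a, p (a,y))))^2
        ≤ ∑ y, (∑ a, p (a,y)) * c2 := Finset.sum_le_sum fun y _ => hy y
      _ = (∑ y, ∑ a, p (a,y)) * c2 := by rw [Finset.sum_mul]
      _ = 1 * c2 := by rw [← Fintype.sum_prod_type_right, h1]
      _ = c2 := one_mul c2
  have hlog2 : (0:ℝ) < (Real.log 2)^2 := by
    have := Real.log_pos (by norm_num : (1:ℝ) < 2)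
    positivity
  have hb2 : ∀ z : X × Y, p z * (Real.logb 2 (p z / (∑ a, p (a, z.2))))^2
      = (p z * (Real.log (p z / (∑ a, p (a, z.2))))^2) / (Real.log 2)^2 := by
    intro z
    rw [Real.logb, div_pow]
    ring
  have hSsum : (∑ z : X × Y, p z * (Real.logb 2 (p z / (∑ a, p (a, z.2))))^2)
      = (∑ z : X × Y, p z * (Real.log (p z / (∑ a, p (a, z.2))))^2) / (Real.log 2)^2 := by
    simp_rw [hb2]
    rw [Finset.sum_div]
  have hRHS : (Real.logb 2 (2 * (Fintype.card X : ℝ) + 1))^2 = c2 / (Real.log 2)^2 := by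
    rw [hc2, Real.logb, div_pow]
  rw [hV2, hSsum, hRHS]
  have step : (∑ z : X × Y, p z * (Real.log (p z / (∑ a, p (a, z.2))))^2) / (Real.log 2)^2
      ≤ c2 / (Real.log 2)^2 := by
    exact div_le_div_of_nonneg_right key hlog2.le
  nlinarith [sq_nonneg H]
end

section
/- Conditional entropy variance under a Markov condition (classical case): let (A,B,C,D,X) be jointly distributed finite random variables such that conditioned on X, the pair (A,C) is independent of (B,D). Then V(AB|CDX) = V(A|CX) + V(B|DX) + 2·Cov(W₁, W₂), where W₁, W₂ are the random variables taking values H(A|C, X=x) and H(B|D, X=x) respectively, with probability p_x. -/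
open Finset Real

/-- Conditional Shannon entropy (base 2) of the first component given the second. -/
noncomputable def condH {A B : Type*} [Fintype A] [Fintype B] (q : A × B → ℝ) : ℝ :=
  -∑ z : A × B, q z * Real.logb 2 (q z / (∑ a, q (a, z.2)))

/-- Conditional entropy variance (base 2) of the first component given the second. -/
noncomputable def condV {A B : Type*} [Fintype A] [Fintype B] (q : A × B → ℝ) : ℝ :=
  ∑ z : A × B, q z * (-Real.logb 2 (q z / (∑ a, q (a, z.2))) - condH q)^2

lemma condH_eq {A B : Type*} [Fintype A] [Fintype B] (q : A × B → ℝ) :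
    condH q = ∑ z : A × B, q z * (-Real.logb 2 (q z / (∑ a, q (a, z.2)))) := by
  simp [condH, ← Finset.sum_neg_distrib, mul_neg]

lemma condV_eq {A B : Type*} [Fintype A] [Fintype B] (q : A × B → ℝ) :
    condV q = ∑ z : A × B, q z * (-Real.logb 2 (q z / (∑ a, q (a, z.2))) - condH q)^2 := rfl

lemma sum_sum_mul {U V : Type*} [Fintype U] [Fintype V] (p : U → ℝ) (q : V → ℝ) :
    ∑ u, ∑ v, p u * q v = (∑ u, p u) * (∑ v, q v) := (Finset.sum_mul_sum _ _ _ _).symm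

lemma inner_lin {U V : Type*} [Fintype U] [Fintype V] (c : ℝ) (f φ : U → ℝ) (g ψ : V → ℝ)
    (hf : ∑ u, f u = 1) (hg : ∑ v, g v = 1) :
    ∑ u, ∑ v, c * f u * g v * (φ u + ψ v)
      = c * ((∑ u, f u * φ u) + (∑ v, g v * ψ v)) := by
  have h : ∀ (u : U) (v : V), c * f u * g v * (φ u + ψ v)
      = (c * (f u * φ u)) * g v + f u * (c * (g v * ψ v)) := fun u v => by ring
  simp_rw [h, Finset.sum_add_distrib]
  rw [sum_sum_mul, sum_sum_mul, hf, hg]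
  simp only [← Finset.mul_sum]
  ring

lemma inner_sq {U V : Type*} [Fintype U] [Fintype V] (c : ℝ) (f φ : U → ℝ) (g ψ : V → ℝ)
    (hf : ∑ u, f u = 1) (hg : ∑ v, g v = 1) :
    ∑ u, ∑ v, c * f u * g v * (φ u + ψ v)^2
      = c * ((∑ u, f u * φ u ^ 2) + (∑ v, g v * ψ v ^ 2)
          + 2 * ((∑ u, f u * φ u) * (∑ v, g v * ψ v))) := by
  have h : ∀ (u : U) (v : V), c * f u * g v * (φ u + ψ v)^2
      = (c * (f u * φ u ^ 2)) * g v + f u * (c * (g v * ψ v ^ 2))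
        + (c * 2 * (f u * φ u)) * (g v * ψ v) := fun u v => by ring
  simp_rw [h, Finset.sum_add_distrib]
  rw [sum_sum_mul, sum_sum_mul, sum_sum_mul, hf, hg]
  simp only [← Finset.mul_sum]
  ring

lemma factor_sum {U : Type*} [Fintype U] (c : ℝ) (f φ : U → ℝ) :
    ∑ u, c * f u * φ u = c * ∑ u, f u * φ u := by
  simp_rw [mul_assoc]
  rw [← Finset.mul_sum]

lemma sum_reindex5 {A B C D X : Type*}
    [Fintype A] [Fintype B] [Fintype C] [Fintype D] [Fintype X]
    (F : X → A × C → B × D → ℝ) :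
    ∑ z : (A × B) × ((C × D) × X), F z.2.2 (z.1.1, z.2.1.1) (z.1.2, z.2.1.2)
      = ∑ x, ∑ u : A × C, ∑ v : B × D, F x u v := by
  rw [show (∑ x, ∑ u : A × C, ∑ v : B × D, F x u v)
      = ∑ w : X × ((A × C) × (B × D)), F w.1 w.2.1 w.2.2 by
    rw [Fintype.sum_prod_type]
    refine Finset.sum_congr rfl fun x _ =>
      (Fintype.sum_prod_type (fun w : (A × C) × (B × D) => F x w.1 w.2)).symm]
  exact Fintype.sum_equiv
    ⟨fun z => (z.2.2, ((z.1.1, z.2.1.1), (z.1.2, z.2.1.2))),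
     fun w => ((w.2.1.1, w.2.2.1), ((w.2.1.2, w.2.2.2), w.1)),
     fun ⟨⟨a,b⟩,⟨⟨c,d⟩,x⟩⟩ => rfl, fun ⟨x,⟨⟨a,c⟩,⟨b,d⟩⟩⟩ => rfl⟩
    _ _ (fun z => rfl)

lemma sum_reindex3 {A C X : Type*} [Fintype A] [Fintype C] [Fintype X]
    (F : X → A × C → ℝ) :
    ∑ z : A × (C × X), F z.2.2 (z.1, z.2.1) = ∑ x, ∑ u : A × C, F x u := by
  rw [show (∑ x, ∑ u : A × C, F x u) = ∑ w : X × (A × C), F w.1 w.2 from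
    (Fintype.sum_prod_type (fun w : X × (A × C) => F w.1 w.2)).symm]
  exact Fintype.sum_equiv
    ⟨fun z => (z.2.2, (z.1, z.2.1)), fun w => (w.2.1, (w.2.2, w.1)),
     fun ⟨a,⟨c,x⟩⟩ => rfl, fun ⟨x,⟨a,c⟩⟩ => rfl⟩ _ _ (fun z => rfl)

/-- Conditional entropy variance under a Markov condition (classical case):
conditioned on `X`, the pair `(A,C)` is independent of `(B,D)`. -/
theorem stmt4 {A B C D X : Type*}
    [Fintype A] [Fintype B] [Fintype C] [Fintype D] [Fintype X]
    (px : X → ℝ) (hpx0 : ∀ x, 0 ≤ px x) (hpx1 : ∑ x, px x = 1)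
    (pAC : X → A × C → ℝ) (pBD : X → B × D → ℝ)
    (hAC0 : ∀ x z, 0 ≤ pAC x z) (hAC1 : ∀ x, ∑ z, pAC x z = 1)
    (hBD0 : ∀ x z, 0 ≤ pBD x z) (hBD1 : ∀ x, ∑ z, pBD x z = 1) :
    condV (fun z : (A × B) × ((C × D) × X) =>
        px z.2.2 * pAC z.2.2 (z.1.1, z.2.1.1) * pBD z.2.2 (z.1.2, z.2.1.2))
      = condV (fun z : A × (C × X) => px z.2.2 * pAC z.2.2 (z.1, z.2.1))
        + condV (fun z : B × (D × X) => px z.2.2 * pBD z.2.2 (z.1, z.2.1))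
        + 2 * ((∑ x, px x * condH (pAC x) * condH (pBD x))
            - (∑ x, px x * condH (pAC x)) * (∑ x, px x * condH (pBD x))) := by
  classical
  set L1 : X → A × C → ℝ :=
    fun x u => -Real.logb 2 (pAC x u / ∑ a, pAC x (a, u.2)) with hL1def
  set L2 : X → B × D → ℝ :=
    fun x v => -Real.logb 2 (pBD x v / ∑ b, pBD x (b, v.2)) with hL2def
  have hH1 : ∀ x, condH (pAC x) = ∑ u : A × C, pAC x u * L1 x u := by
    intro x; rw [condH_eq]
  have hH2 : ∀ x, condH (pBD x) = ∑ v : B × D, pBD x v * L2 x v := by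
    intro x; rw [condH_eq]
  set μ1 := ∑ x, px x * condH (pAC x) with hμ1
  set μ2 := ∑ x, px x * condH (pBD x) with hμ2
  -- positivity of marginals
  have hSApos : ∀ x (u : A × C), pAC x u ≠ 0 → 0 < ∑ a, pAC x (a, u.2) := by
    intro x u hu
    refine lt_of_lt_of_le ((hAC0 x u).lt_of_ne (Ne.symm hu)) ?_
    simpa using Finset.single_le_sum (f := fun a => pAC x (a, u.2))
      (fun i _ => hAC0 x _) (Finset.mem_univ u.1)
  have hSBpos : ∀ x (v : B × D), pBD x v ≠ 0 → 0 < ∑ b, pBD x (b, v.2) := by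
    intro x v hv
    refine lt_of_lt_of_le ((hBD0 x v).lt_of_ne (Ne.symm hv)) ?_
    simpa using Finset.single_le_sum (f := fun b => pBD x (b, v.2))
      (fun i _ => hBD0 x _) (Finset.mem_univ v.1)
  -- key pointwise log splitting
  have keylog : ∀ (x : X) (a : A) (c : C) (b : B) (d : D), px x ≠ 0 →
      pAC x (a, c) ≠ 0 → pBD x (b, d) ≠ 0 →
      -Real.logb 2 (px x * pAC x (a, c) * pBD x (b, d) /
          (px x * ((∑ a', pAC x (a', c)) * (∑ b', pBD x (b', d)))))
        = L1 x (a, c) + L2 x (b, d) := by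
    intro x a c b d hx hu hv
    have hSA := hSApos x (a, c) hu
    have hSB := hSBpos x (b, d) hv
    simp only at hSA hSB
    rw [show px x * pAC x (a, c) * pBD x (b, d) /
        (px x * ((∑ a', pAC x (a', c)) * (∑ b', pBD x (b', d))))
        = (pAC x (a, c) / ∑ a', pAC x (a', c)) * (pBD x (b, d) / ∑ b', pBD x (b', d)) by
      field_simp]
    rw [Real.logb_mul (div_ne_zero hu hSA.ne') (div_ne_zero hv hSB.ne')]
    simp only [hL1def, hL2def]
    ring
  -- marginal of the full distribution
  have hmarg5 : ∀ (x : X) (c : C) (d : D),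
      (∑ p : A × B, px x * pAC x (p.1, c) * pBD x (p.2, d))
        = px x * ((∑ a, pAC x (a, c)) * (∑ b, pBD x (b, d))) := by
    intro x c d
    rw [Fintype.sum_prod_type]
    calc ∑ a, ∑ b, px x * pAC x (a, c) * pBD x (b, d)
        = (∑ a, px x * pAC x (a, c)) * (∑ b, pBD x (b, d)) := sum_sum_mul _ _
      _ = _ := by rw [← Finset.mul_sum]; ring
  -- conditional entropies of the marginal distributions
  have hq1H : condH (fun z : A × (C × X) => px z.2.2 * pAC z.2.2 (z.1, z.2.1)) = μ1 := by
    rw [condH_eq]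
    calc ∑ z : A × (C × X), px z.2.2 * pAC z.2.2 (z.1, z.2.1) *
          (-Real.logb 2 (px z.2.2 * pAC z.2.2 (z.1, z.2.1) /
            ∑ a, px z.2.2 * pAC z.2.2 (a, z.2.1)))
        = ∑ z : A × (C × X), px z.2.2 * pAC z.2.2 (z.1, z.2.1) * L1 z.2.2 (z.1, z.2.1) := by
          refine Finset.sum_congr rfl fun z _ => ?_
          by_cases h : px z.2.2 * pAC z.2.2 (z.1, z.2.1) = 0
          · rw [h, zero_mul, zero_mul]
          · obtain ⟨hx, hu⟩ := mul_ne_zero_iff.mp h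
            rw [← Finset.mul_sum, mul_div_mul_left _ _ hx]
      _ = ∑ x, ∑ u : A × C, px x * pAC x u * L1 x u :=
          sum_reindex3 (fun x u => px x * pAC x u * L1 x u)
      _ = ∑ x, px x * ∑ u : A × C, pAC x u * L1 x u :=
          Finset.sum_congr rfl fun x _ => factor_sum _ _ _
      _ = μ1 := by rw [hμ1]; exact Finset.sum_congr rfl fun x _ => by rw [hH1 x]
  have hq2H : condH (fun z : B × (D × X) => px z.2.2 * pBD z.2.2 (z.1, z.2.1)) = μ2 := by
    rw [condH_eq]
    calc ∑ z : B × (D × X), px z.2.2 * pBD z.2.2 (z.1, z.2.1) *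
          (-Real.logb 2 (px z.2.2 * pBD z.2.2 (z.1, z.2.1) /
            ∑ b, px z.2.2 * pBD z.2.2 (b, z.2.1)))
        = ∑ z : B × (D × X), px z.2.2 * pBD z.2.2 (z.1, z.2.1) * L2 z.2.2 (z.1, z.2.1) := by
          refine Finset.sum_congr rfl fun z _ => ?_
          by_cases h : px z.2.2 * pBD z.2.2 (z.1, z.2.1) = 0
          · rw [h, zero_mul, zero_mul]
          · obtain ⟨hx, hu⟩ := mul_ne_zero_iff.mp h
            rw [← Finset.mul_sum, mul_div_mul_left _ _ hx]
      _ = ∑ x, ∑ v : B × D, px x * pBD x v * L2 x v :=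
          sum_reindex3 (fun x v => px x * pBD x v * L2 x v)
      _ = ∑ x, px x * ∑ v : B × D, pBD x v * L2 x v :=
          Finset.sum_congr rfl fun x _ => factor_sum _ _ _
      _ = μ2 := by rw [hμ2]; exact Finset.sum_congr rfl fun x _ => by rw [hH2 x]
  -- conditional entropy of the full distribution
  have hfullH : condH (fun z : (A × B) × ((C × D) × X) =>
      px z.2.2 * pAC z.2.2 (z.1.1, z.2.1.1) * pBD z.2.2 (z.1.2, z.2.1.2)) = μ1 + μ2 := by
    rw [condH_eq]
    calc ∑ z : (A × B) × ((C × D) × X),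
          px z.2.2 * pAC z.2.2 (z.1.1, z.2.1.1) * pBD z.2.2 (z.1.2, z.2.1.2) *
          (-Real.logb 2 (px z.2.2 * pAC z.2.2 (z.1.1, z.2.1.1) * pBD z.2.2 (z.1.2, z.2.1.2) /
            ∑ a : A × B, px z.2.2 * pAC z.2.2 (a.1, z.2.1.1) * pBD z.2.2 (a.2, z.2.1.2)))
        = ∑ z : (A × B) × ((C × D) × X),
            px z.2.2 * pAC z.2.2 (z.1.1, z.2.1.1) * pBD z.2.2 (z.1.2, z.2.1.2) *
            (L1 z.2.2 (z.1.1, z.2.1.1) + L2 z.2.2 (z.1.2, z.2.1.2)) := by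
          refine Finset.sum_congr rfl fun z _ => ?_
          by_cases h : px z.2.2 * pAC z.2.2 (z.1.1, z.2.1.1) * pBD z.2.2 (z.1.2, z.2.1.2) = 0
          · rw [h, zero_mul, zero_mul]
          · obtain ⟨h', hv⟩ := mul_ne_zero_iff.mp h
            obtain ⟨hx, hu⟩ := mul_ne_zero_iff.mp h'
            rw [hmarg5 z.2.2 z.2.1.1 z.2.1.2,
              keylog z.2.2 z.1.1 z.2.1.1 z.1.2 z.2.1.2 hx hu hv]
      _ = ∑ x, ∑ u : A × C, ∑ v : B × D,
            px x * pAC x u * pBD x v * (L1 x u + L2 x v) :=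
          sum_reindex5 (fun x u v => px x * pAC x u * pBD x v * (L1 x u + L2 x v))
      _ = ∑ x, px x * ((∑ u : A × C, pAC x u * L1 x u) + (∑ v : B × D, pBD x v * L2 x v)) :=
          Finset.sum_congr rfl fun x _ => inner_lin _ _ _ _ _ (hAC1 x) (hBD1 x)
      _ = μ1 + μ2 := by
          rw [hμ1, hμ2, ← Finset.sum_add_distrib]
          exact Finset.sum_congr rfl fun x _ => by rw [hH1 x, hH2 x]; ring
  -- conditional variance of marginal 1
  have hq1V : condV (fun z : A × (C × X) => px z.2.2 * pAC z.2.2 (z.1, z.2.1))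
      = ∑ x, px x * ∑ u : A × C, pAC x u * (L1 x u - μ1)^2 := by
    rw [condV_eq, hq1H]
    calc ∑ z : A × (C × X), px z.2.2 * pAC z.2.2 (z.1, z.2.1) *
          (-Real.logb 2 (px z.2.2 * pAC z.2.2 (z.1, z.2.1) /
            ∑ a, px z.2.2 * pAC z.2.2 (a, z.2.1)) - μ1)^2
        = ∑ z : A × (C × X), px z.2.2 * pAC z.2.2 (z.1, z.2.1) *
            (L1 z.2.2 (z.1, z.2.1) - μ1)^2 := by
          refine Finset.sum_congr rfl fun z _ => ?_
          by_cases h : px z.2.2 * pAC z.2.2 (z.1, z.2.1) = 0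
          · rw [h, zero_mul, zero_mul]
          · obtain ⟨hx, hu⟩ := mul_ne_zero_iff.mp h
            rw [← Finset.mul_sum, mul_div_mul_left _ _ hx]
      _ = ∑ x, ∑ u : A × C, px x * pAC x u * (L1 x u - μ1)^2 :=
          sum_reindex3 (fun x u => px x * pAC x u * (L1 x u - μ1)^2)
      _ = ∑ x, px x * ∑ u : A × C, pAC x u * (L1 x u - μ1)^2 :=
          Finset.sum_congr rfl fun x _ => factor_sum _ _ _
  -- conditional variance of marginal 2
  have hq2V : condV (fun z : B × (D × X) => px z.2.2 * pBD z.2.2 (z.1, z.2.1))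
      = ∑ x, px x * ∑ v : B × D, pBD x v * (L2 x v - μ2)^2 := by
    rw [condV_eq, hq2H]
    calc ∑ z : B × (D × X), px z.2.2 * pBD z.2.2 (z.1, z.2.1) *
          (-Real.logb 2 (px z.2.2 * pBD z.2.2 (z.1, z.2.1) /
            ∑ b, px z.2.2 * pBD z.2.2 (b, z.2.1)) - μ2)^2
        = ∑ z : B × (D × X), px z.2.2 * pBD z.2.2 (z.1, z.2.1) *
            (L2 z.2.2 (z.1, z.2.1) - μ2)^2 := by
          refine Finset.sum_congr rfl fun z _ => ?_
          by_cases h : px z.2.2 * pBD z.2.2 (z.1, z.2.1) = 0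
          · rw [h, zero_mul, zero_mul]
          · obtain ⟨hx, hu⟩ := mul_ne_zero_iff.mp h
            rw [← Finset.mul_sum, mul_div_mul_left _ _ hx]
      _ = ∑ x, ∑ v : B × D, px x * pBD x v * (L2 x v - μ2)^2 :=
          sum_reindex3 (fun x v => px x * pBD x v * (L2 x v - μ2)^2)
      _ = ∑ x, px x * ∑ v : B × D, pBD x v * (L2 x v - μ2)^2 :=
          Finset.sum_congr rfl fun x _ => factor_sum _ _ _
  -- centered first moments
  have hc1 : ∀ x, ∑ u : A × C, pAC x u * (L1 x u - μ1) = condH (pAC x) - μ1 := by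
    intro x
    rw [hH1 x]
    simp_rw [mul_sub]
    rw [Finset.sum_sub_distrib, ← Finset.sum_mul, hAC1 x, one_mul]
  have hc2 : ∀ x, ∑ v : B × D, pBD x v * (L2 x v - μ2) = condH (pBD x) - μ2 := by
    intro x
    rw [hH2 x]
    simp_rw [mul_sub]
    rw [Finset.sum_sub_distrib, ← Finset.sum_mul, hBD1 x, one_mul]
  -- conditional variance of the full distribution
  have hfullV : condV (fun z : (A × B) × ((C × D) × X) =>
      px z.2.2 * pAC z.2.2 (z.1.1, z.2.1.1) * pBD z.2.2 (z.1.2, z.2.1.2))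
      = ∑ x, px x * ((∑ u : A × C, pAC x u * (L1 x u - μ1)^2)
          + (∑ v : B × D, pBD x v * (L2 x v - μ2)^2)
          + 2 * ((condH (pAC x) - μ1) * (condH (pBD x) - μ2))) := by
    rw [condV_eq, hfullH]
    calc ∑ z : (A × B) × ((C × D) × X),
          px z.2.2 * pAC z.2.2 (z.1.1, z.2.1.1) * pBD z.2.2 (z.1.2, z.2.1.2) *
          (-Real.logb 2 (px z.2.2 * pAC z.2.2 (z.1.1, z.2.1.1) * pBD z.2.2 (z.1.2, z.2.1.2) /
            ∑ a : A × B, px z.2.2 * pAC z.2.2 (a.1, z.2.1.1) * pBD z.2.2 (a.2, z.2.1.2))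
            - (μ1 + μ2))^2
        = ∑ z : (A × B) × ((C × D) × X),
            px z.2.2 * pAC z.2.2 (z.1.1, z.2.1.1) * pBD z.2.2 (z.1.2, z.2.1.2) *
            ((L1 z.2.2 (z.1.1, z.2.1.1) - μ1) + (L2 z.2.2 (z.1.2, z.2.1.2) - μ2))^2 := by
          refine Finset.sum_congr rfl fun z _ => ?_
          by_cases h : px z.2.2 * pAC z.2.2 (z.1.1, z.2.1.1) * pBD z.2.2 (z.1.2, z.2.1.2) = 0
          · rw [h, zero_mul, zero_mul]
          · obtain ⟨h', hv⟩ := mul_ne_zero_iff.mp h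
            obtain ⟨hx, hu⟩ := mul_ne_zero_iff.mp h'
            rw [hmarg5 z.2.2 z.2.1.1 z.2.1.2,
              keylog z.2.2 z.1.1 z.2.1.1 z.1.2 z.2.1.2 hx hu hv]
            ring
      _ = ∑ x, ∑ u : A × C, ∑ v : B × D,
            px x * pAC x u * pBD x v * ((L1 x u - μ1) + (L2 x v - μ2))^2 :=
          sum_reindex5 (fun x u v => px x * pAC x u * pBD x v *
            ((L1 x u - μ1) + (L2 x v - μ2))^2)
      _ = ∑ x, px x * ((∑ u : A × C, pAC x u * (L1 x u - μ1)^2)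
            + (∑ v : B × D, pBD x v * (L2 x v - μ2)^2)
            + 2 * ((∑ u : A × C, pAC x u * (L1 x u - μ1))
                * (∑ v : B × D, pBD x v * (L2 x v - μ2)))) :=
          Finset.sum_congr rfl fun x _ => inner_sq _ _ _ _ _ (hAC1 x) (hBD1 x)
      _ = _ := Finset.sum_congr rfl fun x _ => by rw [hc1 x, hc2 x]
  -- put everything together
  rw [hfullV, hq1V, hq2V]
  calc ∑ x, px x * ((∑ u : A × C, pAC x u * (L1 x u - μ1)^2)
          + (∑ v : B × D, pBD x v * (L2 x v - μ2)^2)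
          + 2 * ((condH (pAC x) - μ1) * (condH (pBD x) - μ2)))
      = ∑ x, (px x * ∑ u : A × C, pAC x u * (L1 x u - μ1)^2
          + px x * ∑ v : B × D, pBD x v * (L2 x v - μ2)^2
          + (2 * (px x * condH (pAC x) * condH (pBD x))
            - (2 * μ2) * (px x * condH (pAC x))
            - (2 * μ1) * (px x * condH (pBD x))
            + (2 * (μ1 * μ2)) * px x)) :=
        Finset.sum_congr rfl fun x _ => by ring
    _ = (∑ x, px x * ∑ u : A × C, pAC x u * (L1 x u - μ1)^2)
          + (∑ x, px x * ∑ v : B × D, pBD x v * (L2 x v - μ2)^2)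
          + (2 * (∑ x, px x * condH (pAC x) * condH (pBD x))
            - (2 * μ2) * (∑ x, px x * condH (pAC x))
            - (2 * μ1) * (∑ x, px x * condH (pBD x))
            + (2 * (μ1 * μ2)) * (∑ x, px x)) := by
        simp only [Finset.sum_add_distrib, Finset.sum_sub_distrib, ← Finset.mul_sum]
    _ = _ := by rw [hpx1, ← hμ1, ← hμ2]; ring
end

section
/- Explicit Taylor-type continuity bound for classical Rényi divergence: let P be a probability distribution and Q a nonnegative function on a finite set with supp(P) ⊆ supp(Q). For any α > 1 and μ ∈ (0,1), D_α(P‖Q) ≤ D(P‖Q) + ((α−1)·ln 2 / 2)·V(P‖Q) + (α−1)²·K(α,μ), where K(α,μ) = (1/(6μ³ ln 2))·2^{(α−1)(D_α(P‖Q) − D(P‖Q))}·ln³(2^{(α+μ−1)(D_{α+μ}(P‖Q) − D(P‖Q))} + e²). -/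
set_option maxHeartbeats 1000000

open Finset Real


lemma nonneg_right (f f' : ℝ → ℝ) (hf : ∀ x, HasDerivAt f (f' x) x)
    (h0 : f 0 = 0) (hpos : ∀ x, 0 ≤ x → 0 ≤ f' x) : ∀ x, 0 ≤ x → 0 ≤ f x := by
  have hmono : MonotoneOn f (Set.Ici 0) := by
    apply monotoneOn_of_hasDerivWithinAt_nonneg (convex_Ici 0)
      (fun x _ => ((hf x).continuousAt.continuousWithinAt))
      (f' := f') (fun x hx => (hf x).hasDerivWithinAt)
    intro x hx
    rw [interior_Ici] at hx
    exact hpos x (le_of_lt hx)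
  intro x hx
  have := hmono (Set.self_mem_Ici) hx hx
  linarith [h0 ▸ this]

lemma nonneg_left (f f' : ℝ → ℝ) (hf : ∀ x, HasDerivAt f (f' x) x)
    (h0 : f 0 = 0) (hneg : ∀ x, x ≤ 0 → f' x ≤ 0) : ∀ x, x ≤ 0 → 0 ≤ f x := by
  have hanti : AntitoneOn f (Set.Iic 0) := by
    apply antitoneOn_of_hasDerivWithinAt_nonpos (convex_Iic 0)
      (fun x _ => ((hf x).continuousAt.continuousWithinAt))
      (f' := f') (fun x hx => (hf x).hasDerivWithinAt)
    intro x hx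
    rw [interior_Iic] at hx
    exact hneg x (le_of_lt hx)
  intro x hx
  have := hanti hx (Set.self_mem_Iic) hx
  linarith [h0 ▸ this]

/-- exp x ≤ 1 + x + x²/2 for x ≤ 0 -/
lemma exp_le_quad : ∀ x : ℝ, x ≤ 0 → exp x ≤ 1 + x + x^2/2 := by
  have h := nonneg_left (fun z => 1 + z + z^2/2 - exp z) (fun z => 1 + z - exp z)
    (fun x => by
      have h1 : HasDerivAt (fun z : ℝ => 1 + z + z^2/2 - exp z)
          (0 + 1 + (2*x^1)/2 - exp x) x := by
        exact (((hasDerivAt_const x (1:ℝ)).add (hasDerivAt_id x)).add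
          (((hasDerivAt_pow 2 x)).div_const 2)).sub (Real.hasDerivAt_exp x)
      convert h1 using 1
      ring)
    (by simp)
    (fun x hx => by show (1:ℝ) + x - exp x ≤ 0; nlinarith [add_one_le_exp x])
  intro x hx
  have := h x hx
  linarith

/-- 1 + x + x²/2 ≤ exp x for 0 ≤ x -/
lemma quad_le_exp : ∀ x : ℝ, 0 ≤ x → 1 + x + x^2/2 ≤ exp x := by
  have h := nonneg_right (fun z => exp z - (1 + z + z^2/2)) (fun z => exp z - (1 + z))
    (fun x => by
      have h1 : HasDerivAt (fun z : ℝ => exp z - (1 + z + z^2/2))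
          (exp x - (0 + 1 + (2*x^1)/2)) x := by
        exact (Real.hasDerivAt_exp x).sub (((hasDerivAt_const x (1:ℝ)).add
          (hasDerivAt_id x)).add ((hasDerivAt_pow 2 x).div_const 2))
      convert h1 using 1
      ring)
    (by simp)
    (fun x hx => by show (0:ℝ) ≤ exp x - (1+x); nlinarith [add_one_le_exp x])
  intro x hx
  have := h x hx
  linarith

/-- cubic Taylor lower bound for exp, all reals -/
lemma cubic_le_exp : ∀ x : ℝ, 1 + x + x^2/2 + x^3/6 ≤ exp x := by
  have h := nonneg_right (fun z => exp z - (1 + z + z^2/2 + z^3/6))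
      (fun z => exp z - (1 + z + z^2/2))
    (fun x => by
      have h1 : HasDerivAt (fun z : ℝ => exp z - (1 + z + z^2/2 + z^3/6))
          (exp x - (0 + 1 + (2*x^1)/2 + (3*x^2)/6)) x := by
        exact (Real.hasDerivAt_exp x).sub ((((hasDerivAt_const x (1:ℝ)).add
          (hasDerivAt_id x)).add ((hasDerivAt_pow 2 x).div_const 2)).add
          ((hasDerivAt_pow 3 x).div_const 6))
      convert h1 using 1
      ring)
    (by simp)
    (fun x hx => by show (0:ℝ) ≤ exp x - (1+x+x^2/2); nlinarith [quad_le_exp x hx])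
  have h2 := nonneg_left (fun z => exp z - (1 + z + z^2/2 + z^3/6))
      (fun z => exp z - (1 + z + z^2/2))
    (fun x => by
      have h1 : HasDerivAt (fun z : ℝ => exp z - (1 + z + z^2/2 + z^3/6))
          (exp x - (0 + 1 + (2*x^1)/2 + (3*x^2)/6)) x := by
        exact (Real.hasDerivAt_exp x).sub ((((hasDerivAt_const x (1:ℝ)).add
          (hasDerivAt_id x)).add ((hasDerivAt_pow 2 x).div_const 2)).add
          ((hasDerivAt_pow 3 x).div_const 6))
      convert h1 using 1
      ring)
    (by simp)
    (fun x hx => by show exp x - (1+x+x^2/2) ≤ 0; nlinarith [exp_le_quad x hx])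
  intro x
  rcases le_total 0 x with hx | hx
  · have := h x hx; linarith
  · have := h2 x hx; linarith

/-- exp x - 1 - x ≤ (x²/2) exp x for 0 ≤ x -/
lemma sub_le_sq_exp : ∀ x : ℝ, 0 ≤ x → exp x - 1 - x ≤ x^2/2 * exp x := by
  have h := nonneg_right (fun z => z^2/2 * exp z - (exp z - 1 - z))
      (fun z => (2*z^1)/2 * exp z + z^2/2 * exp z - (exp z - 1))
    (fun x => by
      have h1 : HasDerivAt (fun z : ℝ => z^2/2 * exp z - (exp z - 1 - z))
          ((2*x^1)/2 * exp x + x^2/2 * exp x - (exp x - 0 - 1)) x := by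
        exact (((hasDerivAt_pow 2 x).div_const 2).mul (Real.hasDerivAt_exp x)).sub
          (((Real.hasDerivAt_exp x).sub (hasDerivAt_const x 1)).sub (hasDerivAt_id x))
      convert h1 using 1
      ring)
    (by simp)
    (fun x hx => by
      show (0:ℝ) ≤ (2*x^1)/2 * exp x + x^2/2 * exp x - (exp x - 1)
      have h1 := add_one_le_exp (-x)
      have h2 : (1 - x) * exp x ≤ 1 := by
        have := exp_pos x
        calc (1-x) * exp x ≤ exp (-x) * exp x := by nlinarith
        _ = 1 := by rw [← Real.exp_add]; simp
      nlinarith [exp_pos x, sq_nonneg x, mul_nonneg (mul_nonneg (sq_nonneg x) (le_of_lt (exp_pos x))) (le_of_lt (exp_pos x))])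
  intro x hx
  have := h x hx; linarith

/-- exp x - 1 - x - x²/2 ≤ (x³/6) exp x for 0 ≤ x -/
lemma psi_le_cube_exp : ∀ x : ℝ, 0 ≤ x → exp x - 1 - x - x^2/2 ≤ x^3/6 * exp x := by
  have h := nonneg_right (fun z => z^3/6 * exp z - (exp z - 1 - z - z^2/2))
      (fun z => (3*z^2)/6 * exp z + z^3/6 * exp z - (exp z - 1 - z))
    (fun x => by
      have h1 : HasDerivAt (fun z : ℝ => z^3/6 * exp z - (exp z - 1 - z - z^2/2))
          ((3*x^2)/6 * exp x + x^3/6 * exp x - (((exp x - 0) - 1) - (2*x^1)/2)) x := by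
        exact (((hasDerivAt_pow 3 x).div_const 6).mul (Real.hasDerivAt_exp x)).sub
          ((((Real.hasDerivAt_exp x).sub (hasDerivAt_const x 1)).sub (hasDerivAt_id x)).sub
            ((hasDerivAt_pow 2 x).div_const 2))
      convert h1 using 1
      ring)
    (by simp)
    (fun x hx => by
      show (0:ℝ) ≤ (3*x^2)/6 * exp x + x^3/6 * exp x - (exp x - 1 - x)
      have h1 := sub_le_sq_exp x hx
      nlinarith [mul_nonneg (mul_nonneg (pow_nonneg hx 3) (le_of_lt (exp_pos x))) (le_of_lt (exp_pos x)), exp_pos x])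
  intro x hx
  have := h x hx; linarith


lemma kappa_ge_8 (L : ℝ) (hL : 2 ≤ L) : 8 ≤ L^3 - 3*L^2 + 3*L^2 * exp (2-L) := by
  rcases le_total L 3 with h3 | h3
  · have hc := cubic_le_exp (2 - L)
    have hmul : 3*L^2 * (1 + (2-L) + (2-L)^2/2 + (2-L)^3/6) ≤ 3*L^2 * exp (2-L) :=
      mul_le_mul_of_nonneg_left hc (by positivity)
    have hs : (0:ℝ) ≤ L - 2 := by linarith
    have key : 0 ≤ (L-2)^3 * (4 - (L-2) - (L-2)^2) :=
      mul_nonneg (pow_nonneg hs 3) (by nlinarith)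
    nlinarith [key, hmul]
  · rcases le_total L 4 with h4 | h4
    · have h1 : exp (3 - L) ≥ 4 - L := by
        have := add_one_le_exp (3 - L); linarith
      have h2 : exp (2 - L) = exp (-1) * exp (3 - L) := by
        rw [← Real.exp_add]; ring_nf
      have h3' : exp (-1) ≥ 1/3 := by
        rw [Real.exp_neg]
        have h := Real.exp_one_lt_d9
        rw [ge_iff_le, le_inv_comm₀] <;> [skip; norm_num; exact exp_pos 1]
        linarith
      have h5 : exp (2 - L) ≥ (1/3) * (4 - L) := by
        rw [h2]
        have h6 : (0:ℝ) ≤ 4 - L := by linarith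
        nlinarith [exp_pos (3 - L)]
      nlinarith [sq_nonneg L]
    · nlinarith [exp_pos (2-L), sq_nonneg L]



-- crux polynomial, L ≥ 4
lemma crux_poly (L : ℝ) (h4 : 4 ≤ L) : (L^2 - 3*L + 6)^3 ≤ L^6 - 3*L^5 := by
  nlinarith [pow_nonneg (sub_nonneg.2 h4) 2, pow_nonneg (sub_nonneg.2 h4) 3,
    pow_nonneg (sub_nonneg.2 h4) 4, pow_nonneg (sub_nonneg.2 h4) 5,
    sub_nonneg.2 h4]


lemma crux_exp' (w : ℝ) (hw0 : 0 ≤ w) (hw1 : w ≤ 1) :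
    ((w+3.5)^2 - 3*(w+3.5) + 6)^3
      ≤ (w+3.5)^6 - 3*(w+3.5)^5 + 3*(w+3.5)^5 * (0.135 * (5 - (w+3.5))) := by
  have h5 : w^5 ≤ 1 := pow_le_one₀ hw0 hw1
  have h6 : w^6 ≤ 1 := pow_le_one₀ hw0 hw1
  nlinarith [pow_nonneg hw0 2, pow_nonneg hw0 3, pow_nonneg hw0 4, h5, h6, hw0]

lemma crux_exp (L : ℝ) (h35 : 3.5 ≤ L) (h4 : L ≤ 4) :
    (L^2 - 3*L + 6)^3 ≤ L^6 - 3*L^5 + 3*L^5 * (0.135 * (5 - L)) := by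
  have := crux_exp' (L - 3.5) (by linarith) (by linarith)
  have hL : L - 3.5 + 3.5 = L := by ring
  rw [hL] at this
  exact this


lemma star_lemma (L z : ℝ) (hL : 2 ≤ L) (hz : 0 < z) :
    z^3 ≤ L^3 - 3*L^2 + 3*L^2 * exp (2-L) + 3*L^2 * exp (z-L) := by
  have hEpos : 0 < exp (z - L) := exp_pos _
  have hE2pos : 0 < exp (2 - L) := exp_pos _
  have hL0 : (0:ℝ) < L := by linarith
  have hk := kappa_ge_8 L hL
  rcases le_or_gt z 2 with hz2 | hz2
  · have hz8 : z^3 ≤ 8 := by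
      have h8 := pow_le_pow_left₀ hz.le hz2 3
      norm_num at h8
      linarith
    nlinarith [hz8, mul_pos (mul_pos (by norm_num : (0:ℝ) < 3) (mul_pos hL0 hL0)) hEpos]
  · rcases le_total L z with hzL | hzL
    · -- z ≥ L : Taylor at L with u = z - L ≥ 0
      have hc := cubic_le_exp (z - L)
      have hu : 0 ≤ z - L := by linarith
      have hmul : 3*L^2 * (1 + (z-L) + (z-L)^2/2 + (z-L)^3/6) ≤ 3*L^2 * exp (z-L) :=
        mul_le_mul_of_nonneg_left hc (by positivity)
      have k1 : 0 ≤ L*(L-2)*(z-L)^2 :=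
        mul_nonneg (mul_nonneg hL0.le (by linarith)) (sq_nonneg _)
      have k2 : 0 ≤ (L^2-2)*(z-L)^3 :=
        mul_nonneg (by nlinarith) (pow_nonneg hu 3)
      nlinarith [k1, k2, hmul]
    · -- 2 ≤ z ≤ L
      have hv0 : 0 ≤ L - z := by linarith
      rcases le_total ((L-z) * (L^2 - 2)) (3*L*(L-2)) with hcase | hcase
      · -- Taylor case
        have hc := cubic_le_exp (z - L)
        have hmul : 3*L^2 * (1 + (z-L) + (z-L)^2/2 + (z-L)^3/6) ≤ 3*L^2 * exp (z-L) :=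
          mul_le_mul_of_nonneg_left hc (by positivity)
        have key : 0 ≤ (L-z)^2/2 * (3*L*(L-2) - (L^2-2)*(L-z)) := by
          apply mul_nonneg (by positivity)
          nlinarith
        nlinarith [key, hmul]
      · -- crux case
        have hL2 : (0:ℝ) < L^2 - 2 := by nlinarith
        have hq : (L-z)*(L^2-2) < (L-2)*(L^2-2) :=
          mul_lt_mul_of_pos_right (by linarith) hL2
        have hL35' : 3*L + 2 < L^2 := by nlinarith
        have hL35 : 3.5 ≤ L := by nlinarith
        have hzl : z * L ≤ L^2 - 3*L + 6 := by
          nlinarith [mul_le_mul_of_nonneg_right hcase (le_of_lt hL0)]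
        have hcube : (z*L)^3 ≤ (L^2 - 3*L + 6)^3 :=
          pow_le_pow_left₀ (by positivity) hzl 3
        have hcrux : (L^2 - 3*L + 6)^3 ≤ L^6 - 3*L^5 + 3*L^5 * exp (2-L) := by
          rcases le_total L 4 with h4 | h4
          · have he1 : exp (4 - L) ≥ 5 - L := by
              have := add_one_le_exp (4 - L); linarith
            have he2 : exp (2 - L) * exp 2 = exp (4 - L) := by
              rw [← Real.exp_add]; ring_nf
            have he3 : (0.135 : ℝ) * exp 2 ≤ 1 := by
              have h := Real.exp_one_lt_d9
              have hsq : exp 2 = exp 1 * exp 1 := by rw [← Real.exp_add]; norm_num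
              rw [hsq]; nlinarith [exp_pos 1]
            have he4 : exp (2 - L) ≥ 0.135 * (5 - L) := by
              have h5 : (0:ℝ) ≤ 5 - L := by linarith
              have hE2 : (0:ℝ) < exp 2 := exp_pos 2
              nlinarith [he1, he2, mul_nonneg h5 hE2.le]
            have hcx := crux_exp L hL35 h4
            nlinarith [mul_le_mul_of_nonneg_left he4 (by positivity : (0:ℝ) ≤ 3*L^5)]
          · have := crux_poly L h4
            nlinarith [mul_pos (by positivity : (0:ℝ) < 3*L^5) hE2pos]
        have hfin : z^3 * L^3 ≤ L^3 * (L^3 - 3*L^2 + 3*L^2 * exp (2-L)) := by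
          calc z^3 * L^3 = (z*L)^3 := by ring
          _ ≤ (L^2-3*L+6)^3 := hcube
          _ ≤ L^6 - 3*L^5 + 3*L^5 * exp (2-L) := hcrux
          _ = L^3 * (L^3 - 3*L^2 + 3*L^2 * exp (2-L)) := by ring
        have hL3 : (0:ℝ) < L^3 := by positivity
        have hz3 : z^3 ≤ L^3 - 3*L^2 + 3*L^2 * exp (2-L) :=
          le_of_mul_le_mul_right (by nlinarith [hfin]) hL3
        nlinarith [mul_pos (mul_pos (by norm_num : (0:ℝ) < 3) (mul_pos hL0 hL0)) hEpos]


/-- pointwise bound -/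
lemma pointwise_bound_s7 (L t μ y : ℝ) (hL : 2 ≤ L) (ht : 0 < t) (hμ0 : 0 < μ) :
    exp (t*y) - 1 - t*y - (t*y)^2/2 ≤
      t^3/(6*μ^3) * ((L^3 - 3*L^2 + 3*L^2*exp (2-L)) * exp (t*y)
        + 3*L^2 * exp (-L) * exp ((t+μ)*y)) := by
  have hk := kappa_ge_8 L hL
  have hc : (0:ℝ) < t^3/(6*μ^3) := by positivity
  rcases le_or_gt y 0 with hy | hy
  · have hty : t*y ≤ 0 := mul_nonpos_of_nonneg_of_nonpos ht.le hy
    have h1 : exp (t*y) - 1 - t*y - (t*y)^2/2 ≤ 0 := by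
      have := exp_le_quad (t*y) hty; linarith
    have h2 : (0:ℝ) ≤ t^3/(6*μ^3) * ((L^3 - 3*L^2 + 3*L^2*exp (2-L)) * exp (t*y)
        + 3*L^2 * exp (-L) * exp ((t+μ)*y)) := by
      apply mul_nonneg hc.le
      have e1 : (0:ℝ) ≤ (L^3 - 3*L^2 + 3*L^2*exp (2-L)) * exp (t*y) :=
        mul_nonneg (by linarith) (exp_pos _).le
      have e2 : (0:ℝ) ≤ 3*L^2 * exp (-L) * exp ((t+μ)*y) := by positivity
      linarith
    linarith
  · have hty : 0 ≤ t*y := by positivity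
    have h1 := psi_le_cube_exp (t*y) hty
    have hstar := star_lemma L (μ*y) hL (by positivity)
    have hid : exp (μ*y - L) * exp (t*y) = exp (-L) * exp ((t+μ)*y) := by
      rw [← Real.exp_add, ← Real.exp_add]; ring_nf
    have h3 : (μ*y)^3 * exp (t*y) ≤
        (L^3 - 3*L^2 + 3*L^2*exp (2-L)) * exp (t*y) + 3*L^2 * exp (-L) * exp ((t+μ)*y) := by
      have hmm := mul_le_mul_of_nonneg_right hstar (exp_pos (t*y)).le
      have hid2 : 3*L^2 * (exp (μ*y - L) * exp (t*y))
          = 3*L^2 * (exp (-L) * exp ((t+μ)*y)) := by rw [hid]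
      nlinarith [hmm, hid2]
    have h4 : (t*y)^3/6 * exp (t*y) = t^3/(6*μ^3) * ((μ*y)^3 * exp (t*y)) := by
      field_simp
    calc exp (t*y) - 1 - t*y - (t*y)^2/2 ≤ (t*y)^3/6 * exp (t*y) := h1
      _ = t^3/(6*μ^3) * ((μ*y)^3 * exp (t*y)) := h4
      _ ≤ _ := mul_le_mul_of_nonneg_left h3 hc.le

/-- main summed inequality -/
lemma main_sum {X : Type*} (S : Finset X) (p y : X → ℝ)
    (hp : ∀ x ∈ S, 0 ≤ p x) (hp1 : ∑ x ∈ S, p x = 1) (hy : ∑ x ∈ S, p x * y x = 0)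
    (t μ : ℝ) (ht : 0 < t) (hμ0 : 0 < μ) :
    Real.log (∑ x ∈ S, p x * exp (t * y x)) ≤
      t^2/2 * (∑ x ∈ S, p x * (y x)^2)
      + t^3/(6*μ^3) * (∑ x ∈ S, p x * exp (t * y x))
        * (Real.log ((∑ x ∈ S, p x * exp ((t+μ) * y x)) + exp 2))^3 := by
  set G1 := ∑ x ∈ S, p x * exp (t * y x) with hG1
  set G2 := ∑ x ∈ S, p x * exp ((t+μ) * y x) with hG2
  have hG1ge1 : 1 ≤ G1 := by
    have hle : ∀ x ∈ S, p x * (1 + t * y x) ≤ p x * exp (t * y x) := fun x hx =>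
      mul_le_mul_of_nonneg_left (by have := add_one_le_exp (t * y x); linarith) (hp x hx)
    have hsum := Finset.sum_le_sum hle
    have : ∑ x ∈ S, p x * (1 + t * y x) = 1 := by
      have : ∑ x ∈ S, p x * (1 + t * y x) = (∑ x ∈ S, p x) + t * (∑ x ∈ S, p x * y x) := by
        rw [Finset.mul_sum, ← Finset.sum_add_distrib]
        apply Finset.sum_congr rfl
        intro x _
        ring
      rw [this, hp1, hy]; ring
    linarith
  have hG2ge1 : 1 ≤ G2 := by
    have hle : ∀ x ∈ S, p x * (1 + (t+μ) * y x) ≤ p x * exp ((t+μ) * y x) := fun x hx =>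
      mul_le_mul_of_nonneg_left (by have := add_one_le_exp ((t+μ) * y x); linarith) (hp x hx)
    have hsum := Finset.sum_le_sum hle
    have : ∑ x ∈ S, p x * (1 + (t+μ) * y x) = 1 := by
      have : ∑ x ∈ S, p x * (1 + (t+μ) * y x)
          = (∑ x ∈ S, p x) + (t+μ) * (∑ x ∈ S, p x * y x) := by
        rw [Finset.mul_sum, ← Finset.sum_add_distrib]
        apply Finset.sum_congr rfl
        intro x _
        ring
      rw [this, hp1, hy]; ring
    linarith
  set L := Real.log (G2 + exp 2) with hLdef
  have hG2e : (0:ℝ) < G2 + exp 2 := by have := exp_pos 2; linarith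
  have hL2 : 2 ≤ L := by
    rw [hLdef]
    calc (2:ℝ) = Real.log (exp 2) := by rw [Real.log_exp]
    _ ≤ _ := Real.log_le_log (exp_pos 2) (by linarith)
  have hexpL : exp L = G2 + exp 2 := Real.exp_log hG2e
  -- step 1 : log G1 ≤ G1 - 1
  have hlog : Real.log G1 ≤ G1 - 1 := Real.log_le_sub_one_of_pos (by linarith)
  -- step 2 : identity
  have hid : ∑ x ∈ S, (p x * exp (t * y x) - p x - t*(p x * y x) - t^2/2*(p x * (y x)^2))
      = G1 - 1 - t^2/2 * ∑ x ∈ S, p x * (y x)^2 := by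
    rw [Finset.sum_sub_distrib, Finset.sum_sub_distrib, Finset.sum_sub_distrib,
      ← Finset.mul_sum, ← Finset.mul_sum, hp1, hy]
    ring
  -- step 3 : pointwise bound summed
  have hpt : ∀ x ∈ S, p x * exp (t * y x) - p x - t*(p x * y x) - t^2/2*(p x * (y x)^2)
      ≤ t^3/(6*μ^3) * ((L^3 - 3*L^2 + 3*L^2*exp (2-L)) * (p x * exp (t*y x))
        + 3*L^2 * exp (-L) * (p x * exp ((t+μ)*y x))) := by
    intro x hx
    have h := pointwise_bound_s7 L t μ (y x) hL2 ht hμ0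
    have h2 := mul_le_mul_of_nonneg_left h (hp x hx)
    calc p x * exp (t * y x) - p x - t*(p x * y x) - t^2/2*(p x * (y x)^2)
        = p x * (exp (t*y x) - 1 - t*y x - (t*y x)^2/2) := by ring
      _ ≤ p x * (t^3/(6*μ^3) * ((L^3 - 3*L^2 + 3*L^2*exp (2-L)) * exp (t*y x)
            + 3*L^2 * exp (-L) * exp ((t+μ)*y x))) := h2
      _ = _ := by ring
  have hsum3 := Finset.sum_le_sum hpt
  have hdistrib : ∑ x ∈ S, t^3/(6*μ^3) * ((L^3 - 3*L^2 + 3*L^2*exp (2-L)) * (p x * exp (t*y x))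
        + 3*L^2 * exp (-L) * (p x * exp ((t+μ)*y x)))
      = t^3/(6*μ^3) * ((L^3 - 3*L^2 + 3*L^2*exp (2-L)) * G1 + 3*L^2 * exp (-L) * G2) := by
    rw [← Finset.mul_sum, Finset.sum_add_distrib, ← Finset.mul_sum, ← Finset.mul_sum]
  -- step 5 : final algebra
  have hfinal : (L^3 - 3*L^2 + 3*L^2*exp (2-L)) * G1 + 3*L^2 * exp (-L) * G2 ≤ L^3 * G1 := by
    have hEpos : (0:ℝ) < exp (-L) := exp_pos _
    have hinv : exp (-L) * (G2 + exp 2) = 1 := by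
      rw [← hexpL, ← Real.exp_add]; norm_num
    have h2L : exp (2 - L) = exp 2 * exp (-L) := by
      rw [← Real.exp_add]; ring_nf
    have key : exp 2 * exp (-L) * G1 + exp (-L) * G2 ≤ G1 := by
      nlinarith [mul_nonneg (mul_nonneg hEpos.le (by linarith : (0:ℝ) ≤ G2))
        (by linarith : (0:ℝ) ≤ G1 - 1)]
    have key2 := mul_le_mul_of_nonneg_left key (by positivity : (0:ℝ) ≤ 3*L^2)
    rw [h2L]
    nlinarith [key2]
  have hc : (0:ℝ) < t^3/(6*μ^3) := by positivity
  calc Real.log G1 ≤ G1 - 1 := hlog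
    _ = t^2/2 * (∑ x ∈ S, p x * (y x)^2)
        + (G1 - 1 - t^2/2 * ∑ x ∈ S, p x * (y x)^2) := by ring
    _ ≤ t^2/2 * (∑ x ∈ S, p x * (y x)^2)
        + t^3/(6*μ^3) * ((L^3 - 3*L^2 + 3*L^2*exp (2-L)) * G1 + 3*L^2 * exp (-L) * G2) := by
          rw [← hid, ← hdistrib]
          exact add_le_add le_rfl hsum3
    _ ≤ t^2/2 * (∑ x ∈ S, p x * (y x)^2) + t^3/(6*μ^3) * (L^3 * G1) := by
          exact add_le_add le_rfl (mul_le_mul_of_nonneg_left hfinal hc.le)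
    _ = t^2/2 * (∑ x ∈ S, p x * (y x)^2) + t^3/(6*μ^3) * G1 * L^3 := by ring


/-- Explicit Taylor-type continuity bound for the classical Rényi divergence. -/
theorem stmt7 {X : Type*} [Fintype X] (P Q : X → ℝ)
    (hP0 : ∀ x, 0 ≤ P x) (hP1 : ∑ x, P x = 1)
    (hQ0 : ∀ x, 0 ≤ Q x) (hsupp : ∀ x, 0 < P x → 0 < Q x)
    (D : ℝ) (hD : D = ∑ x, P x * Real.logb 2 (P x / Q x))
    (V : ℝ) (hV : V = ∑ x, P x * (Real.logb 2 (P x / Q x) - D)^2)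
    (Dα : ℝ → ℝ)
    (hDα : ∀ α : ℝ, Dα α =
      (1/(α-1)) * Real.logb 2 (∑ x, Real.rpow (P x) α * Real.rpow (Q x) (1-α)))
    (α μ : ℝ) (hα : 1 < α) (hμ : μ ∈ Set.Ioo (0:ℝ) 1) :
    Dα α ≤ D + ((α-1) * Real.log 2 / 2) * V
      + (α-1)^2 * ((1/(6 * μ^3 * Real.log 2))
          * (2:ℝ) ^ ((α-1) * (Dα α - D))
          * (Real.log ((2:ℝ) ^ ((α+μ-1) * (Dα (α+μ) - D)) + Real.exp 2))^3) := by
  have hμ0 : 0 < μ := hμ.1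
  simp only [Real.rpow_eq_pow] at hDα
  have hlog2 : (0:ℝ) < Real.log 2 := Real.log_pos (by norm_num)
  set S : Finset X := Finset.univ.filter (fun x => 0 < P x) with hS
  have hPS : ∀ x ∈ S, 0 < P x := fun x hx => (Finset.mem_filter.mp hx).2
  have hQS : ∀ x ∈ S, 0 < Q x := fun x hx => hsupp x (hPS x hx)
  have hzero : ∀ x, x ∉ S → P x = 0 := by
    intro x hx
    by_contra h
    exact hx (Finset.mem_filter.mpr ⟨Finset.mem_univ x, lt_of_le_of_ne (hP0 x) (Ne.symm h)⟩)
  -- restrict sums to S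
  have hsum1 : ∑ x ∈ S, P x = 1 := by
    rw [← hP1]
    exact Finset.sum_subset (Finset.filter_subset _ _) (fun x _ hx => hzero x hx)
  have hDS : D = (∑ x ∈ S, P x * Real.log (P x / Q x)) / Real.log 2 := by
    rw [hD, ← Finset.sum_subset (Finset.filter_subset _ _)
      (fun x _ hx => by rw [hzero x hx]; ring), Finset.sum_div]
    apply Finset.sum_congr rfl
    intro x _
    rw [Real.logb, mul_div_assoc]
  set y : X → ℝ := fun x => Real.log (P x / Q x) - D * Real.log 2 with hy
  have hy0 : ∑ x ∈ S, P x * y x = 0 := by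
    have : ∑ x ∈ S, P x * y x
        = (∑ x ∈ S, P x * Real.log (P x / Q x)) - D * Real.log 2 * (∑ x ∈ S, P x) := by
      rw [Finset.mul_sum, ← Finset.sum_sub_distrib]
      apply Finset.sum_congr rfl
      intro x _
      simp only [hy]
      ring
    rw [this, hsum1, hDS]
    field_simp
    ring
  have hVS : ∑ x ∈ S, P x * (y x)^2 = V * (Real.log 2)^2 := by
    rw [hV, ← Finset.sum_subset (Finset.filter_subset (fun x => 0 < P x) Finset.univ)
      (fun x _ hx => by rw [hzero x hx]; ring), Finset.sum_mul]
    apply Finset.sum_congr rfl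
    intro x _
    have hyx : Real.logb 2 (P x / Q x) - D = y x / Real.log 2 := by
      simp only [hy, Real.logb]
      field_simp
    rw [hyx]
    field_simp
  -- T sums
  have hT : ∀ β : ℝ, 1 < β → (∑ x, (P x) ^ β * (Q x) ^ (1-β))
      = exp ((β-1)*(D*Real.log 2)) * ∑ x ∈ S, P x * exp ((β-1) * y x) := by
    intro β hβ
    rw [← Finset.sum_subset (Finset.filter_subset (fun x => 0 < P x) Finset.univ)
      (fun x _ hx => by
        rw [hzero x hx, Real.zero_rpow (by linarith : β ≠ 0), zero_mul]),
      Finset.mul_sum]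
    apply Finset.sum_congr rfl
    intro x hx
    have hP := hPS x hx
    have hQ := hQS x hx
    have hyx : y x = Real.log (P x) - Real.log (Q x) - D * Real.log 2 := by
      simp only [hy]
      rw [Real.log_div hP.ne' hQ.ne']
    calc P x ^ β * Q x ^ (1-β)
        = exp (Real.log (P x) * β + Real.log (Q x) * (1-β)) := by
          rw [Real.rpow_def_of_pos hP, Real.rpow_def_of_pos hQ, ← Real.exp_add]
      _ = exp ((β-1)*(D*Real.log 2)) * exp (Real.log (P x) + (β-1) * y x) := by
          rw [← Real.exp_add]
          congr 1
          rw [hyx]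
          ring
      _ = exp ((β-1)*(D*Real.log 2)) * (P x * exp ((β-1) * y x)) := by
          rw [Real.exp_add, Real.exp_log hP]
  set t : ℝ := α - 1 with hts
  have ht : 0 < t := by simp only [hts]; linarith
  set G1 : ℝ := ∑ x ∈ S, P x * exp (t * y x) with hG1
  set G2 : ℝ := ∑ x ∈ S, P x * exp ((t+μ) * y x) with hG2
  have hSne : S.Nonempty := by
    by_contra h
    rw [Finset.not_nonempty_iff_eq_empty] at h
    rw [h, Finset.sum_empty] at hsum1
    norm_num at hsum1
  have hG1pos : 0 < G1 :=
    Finset.sum_pos (fun x hx => mul_pos (hPS x hx) (exp_pos _)) hSne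
  have hG2pos : 0 < G2 :=
    Finset.sum_pos (fun x hx => mul_pos (hPS x hx) (exp_pos _)) hSne
  -- Dα identities
  have hDα1 : Dα α - D = Real.log G1 / (t * Real.log 2) := by
    rw [hDα α, hT α hα, Real.logb, Real.log_mul (exp_pos _).ne' hG1pos.ne', Real.log_exp]
    simp only [← hts, ← hG1]
    field_simp
    ring
  have hDα2 : Dα (α+μ) - D = Real.log G2 / ((t+μ) * Real.log 2) := by
    rw [hDα (α+μ), hT (α+μ) (by linarith), Real.logb,
      Real.log_mul (exp_pos _).ne' (by
        have : α + μ - 1 = t + μ := by simp only [hts]; ring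
        rw [this]
        exact hG2pos.ne'), Real.log_exp]
    have h1 : α + μ - 1 = t + μ := by simp only [hts]; ring
    rw [h1]
    simp only [← hG2]
    have htμ : t + μ ≠ 0 := by positivity
    field_simp
    ring
  -- rpow identities
  have hA : (2:ℝ) ^ ((α-1) * (Dα α - D)) = G1 := by
    rw [hDα1]
    rw [Real.rpow_def_of_pos (by norm_num : (0:ℝ) < 2)]
    have : Real.log 2 * ((α-1) * (Real.log G1 / (t * Real.log 2))) = Real.log G1 := by
      simp only [← hts]
      field_simp
    rw [this, Real.exp_log hG1pos]

  have hB : (2:ℝ) ^ ((α+μ-1) * (Dα (α+μ) - D)) = G2 := by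
    rw [hDα2]
    rw [Real.rpow_def_of_pos (by norm_num : (0:ℝ) < 2)]
    have htμ : t + μ ≠ 0 := by positivity
    have : Real.log 2 * ((α+μ-1) * (Real.log G2 / ((t+μ) * Real.log 2))) = Real.log G2 := by
      have h1 : α + μ - 1 = t + μ := by simp only [hts]; ring
      rw [h1]
      field_simp
    rw [this, Real.exp_log hG2pos]
  -- main inequality
  have hms := main_sum S P y (fun x hx => (hPS x hx).le) hsum1 hy0 t μ ht hμ0
  rw [← hG1, ← hG2] at hms
  rw [hVS] at hms
  set L : ℝ := Real.log (G2 + exp 2) with hL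
  -- conclude
  rw [hA, hB, ← hL]
  have hkey : ((α-1) * Real.log 2 / 2) * V + (α-1)^2 * ((1/(6 * μ^3 * Real.log 2)) * G1 * L^3)
      = (1/(t * Real.log 2)) * (t^2/2 * (V * (Real.log 2)^2) + t^3/(6*μ^3) * G1 * L^3) := by
    simp only [← hts]
    field_simp
  have hfin : Dα α - D ≤ ((α-1) * Real.log 2 / 2) * V
      + (α-1)^2 * ((1/(6 * μ^3 * Real.log 2)) * G1 * L^3) := by
    rw [hDα1, hkey]
    rw [div_eq_mul_inv, mul_comm (Real.log G1)]
    rw [← one_div]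
    have hc : (0:ℝ) ≤ 1/(t * Real.log 2) := by positivity
    exact mul_le_mul_of_nonneg_left hms hc
  linarith
end

section
/- Bound on the cubed-logarithm moment: let Z be a positive random variable on a finite probability space with E[Z] = 1. Then for any μ ∈ (0,1] and γ > 0, E[Z^γ ln³ Z] ≤ (1/μ³)·E[Z^γ]·ln³(E[Z^{γ+μ}]/E[Z^γ] + e²). -/
open Finset Real

private lemma hasDerivAt_f {x : ℝ} (hx : 0 < x + Real.exp 2) :
    HasDerivAt (fun t => (Real.log (t + Real.exp 2))^3)
      (3 * (Real.log (x + Real.exp 2))^2 * (x + Real.exp 2)⁻¹) x := by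
  have h1 : HasDerivAt (fun t : ℝ => t + Real.exp 2) 1 x :=
    (hasDerivAt_id x).add_const _
  have h2 : HasDerivAt Real.log (x + Real.exp 2)⁻¹ (x + Real.exp 2) :=
    Real.hasDerivAt_log hx.ne'
  have h3 : HasDerivAt (fun t => (Real.log (t + Real.exp 2))^3)
      (((3:ℕ):ℝ) * Real.log (x + Real.exp 2) ^ (3 - 1) * ((x + Real.exp 2)⁻¹ * 1)) x :=
    by
    have h2' : HasDerivAt Real.log (x + Real.exp 2)⁻¹ ((fun t : ℝ => t + Real.exp 2) x) := h2
    exact (h2'.comp x h1).pow 3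
  simpa [mul_comm, mul_assoc, mul_left_comm] using h3

private lemma concave_f :
    ConcaveOn ℝ (Set.Ici (0:ℝ)) (fun t => (Real.log (t + Real.exp 2))^3) := by
  have hint : interior (Set.Ici (0:ℝ)) = Set.Ioi 0 := interior_Ici
  refine concaveOn_of_hasDerivWithinAt2_nonpos (f' := fun x =>
      3 * (Real.log (x + Real.exp 2))^2 * (x + Real.exp 2)⁻¹)
    (f'' := fun x => (6 * Real.log (x + Real.exp 2) - 3 * (Real.log (x + Real.exp 2))^2)
      * ((x + Real.exp 2)^2)⁻¹)
    (convex_Ici 0) ?_ ?_ ?_ ?_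
  · -- continuity
    apply ContinuousOn.pow
    apply ContinuousOn.log (by fun_prop)
    intro x hx
    have : (0:ℝ) < x + Real.exp 2 := by
      have := Real.exp_pos 2; simp only [Set.mem_Ici] at hx; linarith
    exact this.ne'
  · intro x hx
    rw [hint] at hx
    have hs : (0:ℝ) < x + Real.exp 2 := by
      have := Real.exp_pos 2; exact add_pos hx this
    exact (hasDerivAt_f hs).hasDerivWithinAt
  · intro x hx
    rw [hint] at hx
    have hs : (0:ℝ) < x + Real.exp 2 := by
      have := Real.exp_pos 2; exact add_pos hx this
    have h1 : HasDerivAt (fun t : ℝ => t + Real.exp 2) 1 x :=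
      (hasDerivAt_id x).add_const _
    have hlog : HasDerivAt (fun t : ℝ => Real.log (t + Real.exp 2)) ((x + Real.exp 2)⁻¹ * 1) x :=
      by have := (Real.hasDerivAt_log hs.ne').comp x h1; exact this
    have hA : HasDerivAt (fun t : ℝ => 3 * (Real.log (t + Real.exp 2))^2)
        (3 * (2 * (Real.log (x + Real.exp 2))^1 * ((x + Real.exp 2)⁻¹ * 1))) x :=
      (hlog.pow 2).const_mul 3
    have hB : HasDerivAt (fun t : ℝ => (t + Real.exp 2)⁻¹)
        (-1 / (x + Real.exp 2)^2) x := by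
      have : HasDerivAt (fun t : ℝ => (t + Real.exp 2)⁻¹) _ x := (h1.inv hs.ne')
      simpa using this
    have : HasDerivAt (fun t : ℝ => 3 * (Real.log (t + Real.exp 2))^2 * (t + Real.exp 2)⁻¹)
        (3 * (2 * (Real.log (x + Real.exp 2))^1 * ((x + Real.exp 2)⁻¹ * 1)) * (x + Real.exp 2)⁻¹
          + 3 * (Real.log (x + Real.exp 2))^2 * (-1 / (x + Real.exp 2)^2)) x := hA.mul hB
    apply HasDerivAt.hasDerivWithinAt
    exact this.congr_deriv (by rw [div_eq_mul_inv, ← inv_pow]; ring)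
  · intro x hx
    rw [hint] at hx
    have hs : Real.exp 2 ≤ x + Real.exp 2 := by linarith [(Set.mem_Ioi.mp hx).le]
    have hL : 2 ≤ Real.log (x + Real.exp 2) := by
      calc (2:ℝ) = Real.log (Real.exp 2) := (Real.log_exp 2).symm
        _ ≤ Real.log (x + Real.exp 2) := Real.log_le_log (Real.exp_pos 2) hs
    have h1 : 6 * Real.log (x + Real.exp 2) - 3 * (Real.log (x + Real.exp 2))^2 ≤ 0 := by
      nlinarith
    have h2 : (0:ℝ) ≤ ((x + Real.exp 2)^2)⁻¹ := by positivity
    exact mul_nonpos_of_nonpos_of_nonneg h1 h2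

private lemma pointwise_bound_s9 {z μ : ℝ} (hz : 0 < z) (hμ : 0 < μ) :
    (Real.log z)^3 ≤ (1 / μ^3) * (Real.log (z ^ μ + Real.exp 2))^3 := by
  have hzμ : 0 < z ^ μ := Real.rpow_pos_of_pos hz μ
  have hlog : Real.log (z ^ μ) = μ * Real.log z := Real.log_rpow hz μ
  have hR2 : 2 ≤ Real.log (z ^ μ + Real.exp 2) := by
    calc (2:ℝ) = Real.log (Real.exp 2) := (Real.log_exp 2).symm
      _ ≤ Real.log (z ^ μ + Real.exp 2) := Real.log_le_log (Real.exp_pos 2) (by linarith)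
  have key : (μ * Real.log z)^3 ≤ (Real.log (z ^ μ + Real.exp 2))^3 := by
    rcases le_or_gt (Real.log z) 0 with h | h
    · have h1 : (μ * Real.log z)^3 ≤ 0 := by
        have : μ * Real.log z ≤ 0 := mul_nonpos_of_nonneg_of_nonpos hμ.le h
        exact Odd.pow_nonpos ⟨1, by norm_num⟩ this
      have h2 : (0:ℝ) ≤ (Real.log (z ^ μ + Real.exp 2))^3 :=
        pow_nonneg (by linarith) 3
      linarith
    · have h0 : 0 ≤ μ * Real.log z := by positivity
      have hle : μ * Real.log z ≤ Real.log (z ^ μ + Real.exp 2) := by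
        rw [← hlog]
        exact Real.log_le_log hzμ (by linarith [Real.exp_pos 2])
      exact pow_le_pow_left₀ h0 hle 3
  have hμ3 : 0 < μ^3 := by positivity
  have heq : (Real.log z)^3 = (μ * Real.log z)^3 / μ^3 := by
    field_simp
  have heq2 : (1 / μ^3) * (Real.log (z ^ μ + Real.exp 2))^3
      = (Real.log (z ^ μ + Real.exp 2))^3 / μ^3 := by ring
  rw [heq, heq2]
  gcongr

/-- Bound on the cubed-logarithm moment of a positive random variable with mean 1. -/
theorem stmt9 {Ω : Type*} [Fintype Ω] (w : Ω → ℝ) (Z : Ω → ℝ)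
    (hw0 : ∀ ω, 0 ≤ w ω) (hw1 : ∑ ω, w ω = 1)
    (hZ : ∀ ω, 0 < Z ω) (hEZ : ∑ ω, w ω * Z ω = 1)
    (μ γ : ℝ) (hμ : 0 < μ) (hμ1 : μ ≤ 1) (hγ : 0 < γ) :
    ∑ ω, w ω * Real.rpow (Z ω) γ * (Real.log (Z ω))^3
      ≤ (1 / μ^3) * (∑ ω, w ω * Real.rpow (Z ω) γ)
        * (Real.log ((∑ ω, w ω * Real.rpow (Z ω) (γ + μ))
            / (∑ ω, w ω * Real.rpow (Z ω) γ) + Real.exp 2))^3 := by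
  set S : ℝ := ∑ ω, w ω * Real.rpow (Z ω) γ with hS
  have hterm : ∀ ω, 0 ≤ w ω * Real.rpow (Z ω) γ := fun ω =>
    mul_nonneg (hw0 ω) (Real.rpow_pos_of_pos (hZ ω) γ).le
  have hSpos : 0 < S := by
    obtain ⟨ω₀, hω₀⟩ : ∃ ω, 0 < w ω := by
      by_contra h
      push_neg at h
      have : ∀ ω, w ω = 0 := fun ω => le_antisymm (h ω) (hw0 ω)
      simp [this] at hw1
    have : 0 < w ω₀ * Real.rpow (Z ω₀) γ :=
      mul_pos hω₀ (Real.rpow_pos_of_pos (hZ ω₀) γ)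
    exact Finset.sum_pos' (fun ω _ => hterm ω) ⟨ω₀, Finset.mem_univ ω₀, this⟩
  set p : Ω → ℝ := fun ω => w ω * Real.rpow (Z ω) γ / S with hp
  have hp0 : ∀ ω ∈ Finset.univ, (0:ℝ) ≤ p ω := fun ω _ => div_nonneg (hterm ω) hSpos.le
  have hp1 : ∑ ω, p ω = 1 := by
    rw [hp]
    rw [← Finset.sum_div]
    exact div_self hSpos.ne'
  -- Jensen's inequality
  have hmem : ∀ ω ∈ Finset.univ, (Real.rpow (Z ω) μ) ∈ Set.Ici (0:ℝ) :=
    fun ω _ => (Real.rpow_pos_of_pos (hZ ω) μ).le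
  have jensen := concave_f.le_map_sum hp0 hp1 hmem (p := fun ω => Real.rpow (Z ω) μ)
  have hsum_eq : ∑ ω, p ω • Real.rpow (Z ω) μ
      = (∑ ω, w ω * Real.rpow (Z ω) (γ + μ)) / S := by
    simp only [smul_eq_mul, hp, div_mul_eq_mul_div]
    rw [← Finset.sum_div]
    congr 1
    apply Finset.sum_congr rfl
    intro ω _
    have : Real.rpow (Z ω) (γ + μ) = Real.rpow (Z ω) γ * Real.rpow (Z ω) μ :=
      Real.rpow_add (hZ ω) γ μ
    rw [this]
    ring
  rw [hsum_eq] at jensen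
  -- pointwise bound then sum
  have step1 : ∑ ω, w ω * Real.rpow (Z ω) γ * (Real.log (Z ω))^3
      ≤ (1 / μ^3) * ∑ ω, w ω * Real.rpow (Z ω) γ
          * (Real.log (Real.rpow (Z ω) μ + Real.exp 2))^3 := by
    rw [Finset.mul_sum]
    apply Finset.sum_le_sum
    intro ω _
    have hpw := pointwise_bound_s9 (hZ ω) hμ
    calc w ω * Real.rpow (Z ω) γ * (Real.log (Z ω))^3
        ≤ w ω * Real.rpow (Z ω) γ
          * ((1 / μ^3) * (Real.log (Real.rpow (Z ω) μ + Real.exp 2))^3) :=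
          mul_le_mul_of_nonneg_left hpw (hterm ω)
      _ = 1 / μ^3 * (w ω * Real.rpow (Z ω) γ
          * (Real.log (Real.rpow (Z ω) μ + Real.exp 2))^3) := by ring
  refine step1.trans ?_
  have step2 : ∑ ω, w ω * Real.rpow (Z ω) γ
        * (Real.log (Real.rpow (Z ω) μ + Real.exp 2))^3
      ≤ S * (Real.log ((∑ ω, w ω * Real.rpow (Z ω) (γ + μ)) / S + Real.exp 2))^3 := by
    have : ∑ ω, w ω * Real.rpow (Z ω) γ * (Real.log (Real.rpow (Z ω) μ + Real.exp 2))^3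
        = S * ∑ ω, p ω • (Real.log (Real.rpow (Z ω) μ + Real.exp 2))^3 := by
      rw [Finset.mul_sum]
      apply Finset.sum_congr rfl
      intro ω _
      rw [smul_eq_mul, hp]
      field_simp
    rw [this]
    exact mul_le_mul_of_nonneg_left jensen hSpos.le
  have h3 : 0 ≤ 1 / μ^3 := by positivity
  calc 1 / μ^3 * ∑ ω, w ω * Real.rpow (Z ω) γ
        * (Real.log (Real.rpow (Z ω) μ + Real.exp 2))^3
      ≤ 1 / μ^3 * (S * (Real.log ((∑ ω, w ω * Real.rpow (Z ω) (γ + μ)) / S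
          + Real.exp 2))^3) := mul_le_mul_of_nonneg_left step2 h3
    _ = 1 / μ^3 * S * (Real.log ((∑ ω, w ω * Real.rpow (Z ω) (γ + μ)) / S
          + Real.exp 2))^3 := by ring
end

section
/- Variance bound for the infrequent-sampling tradeoff function: with the setup of the previous construction (𝒳 = 𝒳′ ∪ {⊥}, γ ∈ (0,1], g affine on 𝒫(𝒳′), and f defined by f(δ_x) = Max(g) + (1/γ)(g(δ_x) − Max(g)) for x ∈ 𝒳′ and f(δ_⊥) = Max(g)): for every q ∈ 𝒫(𝒳) of the form q(x) = γ q′(x) on 𝒳′ and q(⊥) = 1−γ with q′ ∈ 𝒫(𝒳′), one has Σ_{x∈𝒳} q(x) f(δ_x)² − (Σ_{x∈𝒳} q(x) f(δ_x))² ≤ (1/γ)·(Max(g) − Min(g))², where Max(g) = max_{x∈𝒳′} g(δ_x) and Min(g) = min_{x∈𝒳′} g(δ_x). -/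
open Finset Real

/-- Variance bound for the infrequent-sampling tradeoff function. -/
theorem stmt17 {X' : Type*} [Fintype X'] [Nonempty X']
    (γ : ℝ) (hγ0 : 0 < γ) (hγ1 : γ ≤ 1)
    (g : X' → ℝ)
    (M : ℝ) (hM : M = Finset.univ.sup' Finset.univ_nonempty g)
    (m : ℝ) (hm : m = Finset.univ.inf' Finset.univ_nonempty g)
    (f : Option X' → ℝ)
    (hf : ∀ x : X', f (some x) = M + (1/γ) * (g x - M))
    (hfbot : f none = M)
    (q' : X' → ℝ) (hq'0 : ∀ x, 0 ≤ q' x) (hq'1 : ∑ x, q' x = 1) :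
    (∑ z : Option X', (z.elim (1-γ) (fun x => γ * q' x)) * (f z)^2)
      - (∑ z : Option X', (z.elim (1-γ) (fun x => γ * q' x)) * f z)^2
      ≤ (1/γ) * (M - m)^2 := by
  have hγ : γ ≠ 0 := ne_of_gt hγ0
  set G : ℝ := ∑ x, q' x * g x with hG
  set S : ℝ := ∑ x, q' x * (g x - M)^2 with hSdef
  have h1 : (∑ z : Option X', (z.elim (1-γ) (fun x => γ * q' x)) * f z) = G := by
    rw [Fintype.sum_option]
    simp only [Option.elim_none, Option.elim_some, hfbot]
    have : ∀ x ∈ Finset.univ, (γ * q' x) * f (some x)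
        = q' x * g x + (γ - 1) * q' x * M := by
      intro x _
      rw [hf]; field_simp; ring
    rw [Finset.sum_congr rfl this, Finset.sum_add_distrib, hG]
    have : ∑ x, (γ - 1) * q' x * M = (γ - 1) * M := by
      rw [← Finset.sum_mul, ← Finset.mul_sum, hq'1]; ring
    rw [this]; ring
  have h2 : (∑ z : Option X', (z.elim (1-γ) (fun x => γ * q' x)) * (f z)^2)
      = (1/γ) * S + 2 * M * G + (γ - 2) * M^2 + (1 - γ) * M^2 := by
    rw [Fintype.sum_option]
    simp only [Option.elim_none, Option.elim_some, hfbot]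
    have : ∀ x ∈ Finset.univ, (γ * q' x) * (f (some x))^2
        = (1/γ) * (q' x * (g x - M)^2) + 2 * M * (q' x * g x)
          + (γ - 2) * q' x * M^2 := by
      intro x _
      rw [hf]; field_simp; ring
    rw [Finset.sum_congr rfl this]
    rw [Finset.sum_add_distrib, Finset.sum_add_distrib, ← Finset.mul_sum,
      ← Finset.mul_sum]
    have h3 : ∑ x, (γ - 2) * q' x * M^2 = (γ - 2) * M^2 := by
      have : ∀ x ∈ Finset.univ, (γ - 2) * q' x * M^2 = ((γ-2)*M^2) * q' x := by
        intro x _; ring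
      rw [Finset.sum_congr rfl this, ← Finset.mul_sum, hq'1, mul_one]
    rw [h3, hSdef, hG]; ring
  have hS : S ≤ (M - m)^2 := by
    have hterm : ∀ x ∈ Finset.univ, q' x * (g x - M)^2 ≤ q' x * (M - m)^2 := by
      intro x _
      have hgM : g x ≤ M := hM ▸ Finset.le_sup' g (Finset.mem_univ x)
      have hmg : m ≤ g x := hm ▸ Finset.inf'_le g (Finset.mem_univ x)
      exact mul_le_mul_of_nonneg_left
        (sq_le_sq' (by linarith) (by linarith)) (hq'0 x)
    calc S ≤ ∑ x, q' x * (M - m)^2 := Finset.sum_le_sum hterm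
      _ = (M - m)^2 := by rw [← Finset.sum_mul, hq'1, one_mul]
  rw [h1, h2]
  have hpos : (0:ℝ) ≤ 1/γ := by positivity
  have := mul_nonneg hpos (by linarith : (0:ℝ) ≤ (M - m)^2 - S)
  nlinarith [sq_nonneg (G - M)]
end
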